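/- arXiv:1804.08710 — 8 statements merged into one kernel-verified Lean document; each statement's English description precedes it below -/
import Mathlib

section
/- In a bicategory B, for a 1-morphism i : a ⟶ b the following are equivalent: (1) there exists a 1-morphism L : b ⟶ a and an adjunction L ⊣ i whose counit 2-morphism i ≫ L ⟶ 𝟙_a (the composite of i followed by L, mapped to the identity of a) is invertible (i.e. i is a left split subobject of b); (2) i admits a left adjoint and i is representably fully faithful, meaning that for every object x of B the functor between hom-categories Hom(x, a) ⥤ Hom(x, b) given by postcomposition with i is fully faithful. -/
open CategoryTheory Bicategory

universe w v u

section Aux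

variable {B : Type u} [Bicategory.{w, v} B] {a b : B} {L : b ⟶ a} {i : a ⟶ b}

/-- A bicategorical adjunction `L ⊣ i` induces, for each object `x`, an adjunction between
the postcomposition functors on hom-categories. -/
def homAdjAux (adj : Bicategory.Adjunction L i) (x : B) :
    (postcomp x L : (x ⟶ b) ⥤ (x ⟶ a)) ⊣ (postcomp x i : (x ⟶ a) ⥤ (x ⟶ b)) where
  unit :=
    { app := fun h => (ρ_ h).inv ≫ h ◁ adj.unit ≫ (α_ h L i).inv
      naturality := by
        intros; dsimp [postcomp]
        rw [rightUnitor_inv_naturality_assoc, ← whisker_exchange_assoc]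
        simp }
  counit :=
    { app := fun k => (α_ k i L).hom ≫ k ◁ adj.counit ≫ (ρ_ k).hom
      naturality := by
        intros; dsimp [postcomp]
        rw [associator_naturality_left_assoc, ← whisker_exchange_assoc]
        simp }
  left_triangle_components h := by
    dsimp [postcomp]
    calc ((ρ_ h).inv ≫ h ◁ adj.unit ≫ (α_ h L i).inv) ▷ L ≫
          (α_ (h ≫ L) i L).hom ≫ (h ≫ L) ◁ adj.counit ≫ (ρ_ (h ≫ L)).hom
        = 𝟙 _ ⊗≫ h ◁ (leftZigzag adj.unit adj.counit) ⊗≫ 𝟙 _ := by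
          dsimp only [leftZigzag]; bicategory
      _ = 𝟙 _ ⊗≫ h ◁ ((λ_ L).hom ≫ (ρ_ L).inv) ⊗≫ 𝟙 _ := by rw [adj.left_triangle]
      _ = 𝟙 (h ≫ L) := by bicategory
  right_triangle_components k := by
    dsimp [postcomp]
    calc ((ρ_ (k ≫ i)).inv ≫ (k ≫ i) ◁ adj.unit ≫ (α_ (k ≫ i) L i).inv) ≫
          ((α_ k i L).hom ≫ k ◁ adj.counit ≫ (ρ_ k).hom) ▷ i
        = 𝟙 _ ⊗≫ k ◁ (rightZigzag adj.unit adj.counit) ⊗≫ 𝟙 _ := by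
          dsimp only [rightZigzag]; bicategory
      _ = 𝟙 _ ⊗≫ k ◁ ((ρ_ i).hom ≫ (λ_ i).inv) ⊗≫ 𝟙 _ := by rw [adj.right_triangle]
      _ = 𝟙 (k ≫ i) := by bicategory

end Aux

/-- In a bicategory, a 1-morphism `i : a ⟶ b` is a left split subobject (i.e. admits a left
adjoint `L` whose counit `i ≫ L ⟶ 𝟙 a` is invertible) if and only if `i` admits a left adjoint
and is representably fully faithful (postcomposition with `i` on each hom-category
`Hom(x, a) ⥤ Hom(x, b)` is fully faithful). -/
theorem left_split_subobject_iff {B : Type u} [Bicategory.{w, v} B] {a b : B} (i : a ⟶ b) :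
    (∃ (L : b ⟶ a) (adj : Bicategory.Adjunction L i), IsIso adj.counit) ↔
      ((∃ L : b ⟶ a, Nonempty (Bicategory.Adjunction L i)) ∧
        ∀ x : B, (postcomp x i : (x ⟶ a) ⥤ (x ⟶ b)).Full ∧
          (postcomp x i : (x ⟶ a) ⥤ (x ⟶ b)).Faithful) := by
  constructor
  · rintro ⟨L, adj, hiso⟩
    refine ⟨⟨L, ⟨adj⟩⟩, fun x => ?_⟩
    let A := homAdjAux adj x
    haveI : ∀ k : x ⟶ a, IsIso (A.counit.app k) := fun k => by
      dsimp [A, homAdjAux]; exact (inferInstance : IsIso ((α_ k i L).hom ≫ k ◁ adj.counit ≫ (ρ_ k).hom))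
    haveI : IsIso A.counit := NatIso.isIso_of_isIso_app A.counit
    let ff := A.fullyFaithfulROfIsIsoCounit
    exact ⟨ff.full, ff.faithful⟩
  · rintro ⟨⟨L, ⟨adj⟩⟩, h⟩
    refine ⟨L, adj, ?_⟩
    haveI := (h a).1
    haveI := (h a).2
    let A := homAdjAux adj a
    haveI : IsIso A.counit := A.counit_isIso_of_R_fully_faithful
    haveI : IsIso (A.counit.app (𝟙 a)) := inferInstance
    have e : A.counit.app (𝟙 a) =
        (α_ (𝟙 a) i L).hom ≫ 𝟙 a ◁ adj.counit ≫ (ρ_ (𝟙 a)).hom := rfl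
    haveI : IsIso ((α_ (𝟙 a) i L).hom ≫ 𝟙 a ◁ adj.counit ≫ (ρ_ (𝟙 a)).hom) := by
      rw [← e]; assumption
    haveI : IsIso (𝟙 a ◁ adj.counit) := by
      haveI := IsIso.of_isIso_comp_left (α_ (𝟙 a) i L).hom
        (𝟙 a ◁ adj.counit ≫ (ρ_ (𝟙 a)).hom)
      exact IsIso.of_isIso_comp_right (𝟙 a ◁ adj.counit) (ρ_ (𝟙 a)).hom
    have e2 : adj.counit = (λ_ (i ≫ L)).inv ≫ 𝟙 a ◁ adj.counit ≫ (λ_ (𝟙 a)).hom := by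
      simp
    rw [e2]; infer_instance
end

section
/- Let C be a small category and D a category with all filtered colimits, and let F : Ind C ⥤ D be a functor. Then F preserves filtered colimits if and only if F, together with the identity natural transformation on F ∘ Ind.yoneda, is a left Kan extension of F ∘ Ind.yoneda along Ind.yoneda : C ⥤ Ind C. In particular, two filtered-colimit-preserving functors Ind C ⥤ D whose composites with Ind.yoneda are naturally isomorphic are themselves naturally isomorphic. -/
open CategoryTheory Limits

universe v u

section Aux

variable {C : Type v} [SmallCategory C] {D : Type u} [Category.{v} D] [HasFilteredColimits D]

instance indCostructuredArrowFiltered (X : Ind C) :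
    IsFiltered (CostructuredArrow (Ind.yoneda (C := C)) X) := by
  suffices IsFiltered (CostructuredArrow yoneda ((Ind.inclusion C).obj X)) from
    IsFiltered.of_equivalence
      ((CostructuredArrow.post Ind.yoneda (Ind.inclusion C) X).asEquivalence.trans
      (CostructuredArrow.mapNatIso Ind.yonedaCompInclusion)).symm
  exact ((isIndObject_iff _).1 (Ind.isIndObject_inclusion_obj X)).1

/-- The tautological cocone over the costructured arrow category, with point `X`. -/
@[simps]
noncomputable def indTautCocone (X : Ind C) :
    Cocone (CostructuredArrow.proj (Ind.yoneda (C := C)) X ⋙ Ind.yoneda) where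
  pt := X
  ι :=
    { app := fun g => g.hom
      naturality := fun g g' ψ => by exact (CostructuredArrow.w ψ).trans (Category.comp_id _).symm }

/-- The tautological cocone is a colimit cocone: `Ind.yoneda` is dense. -/
noncomputable def isColimitIndTautCocone (X : Ind C) : IsColimit (indTautCocone X) := by
  let e : CostructuredArrow (Ind.yoneda (C := C)) X ≌
      CostructuredArrow yoneda ((Ind.inclusion C).obj X) :=
    (CostructuredArrow.post Ind.yoneda (Ind.inclusion C) X).asEquivalence.trans
      (CostructuredArrow.mapNatIso Ind.yonedaCompInclusion)
  have h1 := (Presheaf.isColimitTautologicalCocone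
    ((Ind.inclusion C).obj X)).whiskerEquivalence e
  let δ : CostructuredArrow.proj (Ind.yoneda (C := C)) X ⋙ Ind.yoneda ⋙ Ind.inclusion C ≅
      e.functor ⋙ CostructuredArrow.proj yoneda ((Ind.inclusion C).obj X) ⋙ yoneda :=
    Functor.isoWhiskerLeft (CostructuredArrow.proj (Ind.yoneda (C := C)) X) Ind.yonedaCompInclusion
  have h2 : IsColimit ((Ind.inclusion C).mapCocone (indTautCocone X)) := by
    refine IsColimit.ofIsoColimit ((IsColimit.precomposeHomEquiv δ _).symm h1)
      (Cocones.ext (Iso.refl _) ?_)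
    intro g
    dsimp [e, δ]
    erw [Category.comp_id]
    erw [NatTrans.comp_app]
    simp [CostructuredArrow.mapNatIso, CostructuredArrow.post, CostructuredArrow.map]
    exact Iso.hom_inv_id_app_assoc _ _ _
  exact isColimitOfReflects (Ind.inclusion C) h2

/-- `Hom(Ind.yoneda.obj A, -)` is isomorphic to evaluation of the underlying presheaf at `A`. -/
noncomputable def indCoyonedaIso (A : C) :
    coyoneda.obj (Opposite.op ((Ind.yoneda (C := C)).obj A)) ≅
      Ind.inclusion C ⋙ (evaluation Cᵒᵖ (Type v)).obj (Opposite.op A) :=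
  NatIso.ofComponents
    (fun Y => Equiv.toIso
      (Ind.inclusion.fullyFaithful.homEquiv.trans
        ((Iso.homCongr (Ind.yonedaCompInclusion.app A) (Iso.refl _)).trans yonedaEquiv)))
    (fun {Y Y'} f => by
      ext g
      dsimp [Iso.homCongr]
      simp only [Category.comp_id, Functor.map_comp, ← Category.assoc]
      change yonedaEquiv (Ind.yonedaCompInclusion.inv.app A ≫ (Ind.inclusion C).map (g ≫ f)) = ((Ind.inclusion C).map f).app _ (yonedaEquiv (Ind.yonedaCompInclusion.inv.app A ≫ (Ind.inclusion C).map g))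
      rw [Functor.map_comp, ← Category.assoc]
      exact yonedaEquiv_comp _ _)

instance (A : C) :
    PreservesFilteredColimits (coyoneda.obj (Opposite.op ((Ind.yoneda (C := C)).obj A))) := by
  have : PreservesFilteredColimits
      (Ind.inclusion C ⋙ (evaluation Cᵒᵖ (Type v)).obj (Opposite.op A)) := by
    constructor
    intro J _ _
    infer_instance
  constructor
  intro J _ _
  exact preservesColimitsOfShape_of_natIso (indCoyonedaIso A).symm

variable {J : Type v} [SmallCategory J] [IsFiltered J] {K : J ⥤ Ind C}

theorem ind_exists_lift {c : Cocone K} (hc : IsColimit c) {A : C}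
    (g : (Ind.yoneda (C := C)).obj A ⟶ c.pt) :
    ∃ (j : J) (g' : Ind.yoneda.obj A ⟶ K.obj j), g' ≫ c.ι.app j = g := by
  obtain ⟨j, y, hy⟩ := Types.jointly_surjective _
    (isColimitOfPreserves (coyoneda.obj (Opposite.op (Ind.yoneda.obj A))) hc) g
  exact ⟨j, y, hy⟩

theorem ind_lift_eq {c : Cocone K} (hc : IsColimit c) {A : C} {j j' : J}
    {g : (Ind.yoneda (C := C)).obj A ⟶ K.obj j} {g' : Ind.yoneda.obj A ⟶ K.obj j'}
    (h : g ≫ c.ι.app j = g' ≫ c.ι.app j') :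
    ∃ (k : J) (φ : j ⟶ k) (φ' : j' ⟶ k), g ≫ K.map φ = g' ≫ K.map φ' := by
  have := (Types.FilteredColimit.isColimit_eq_iff
    (K ⋙ coyoneda.obj (Opposite.op (Ind.yoneda.obj A)))
    (isColimitOfPreserves (coyoneda.obj (Opposite.op (Ind.yoneda.obj A))) hc)
    (xi := g) (xj := g')).mp h
  exact this

end Aux

section Main

variable {C : Type v} [SmallCategory C] {D : Type u} [Category.{v} D] [HasFilteredColimits D]

/-- If `G` preserves filtered colimits, then `(G, 𝟙)` is a pointwise left Kan extension of
`Ind.yoneda ⋙ G` along `Ind.yoneda`. -/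
noncomputable def indIsPointwiseLKE (G : Ind C ⥤ D) [PreservesFilteredColimits G] :
    (Functor.LeftExtension.mk G
      (𝟙 (Ind.yoneda ⋙ G))).IsPointwiseLeftKanExtension := fun X => by
  have h := isColimitOfPreserves G (isColimitIndTautCocone X)
  exact IsColimit.ofIsoColimit h (Cocones.ext (Iso.refl _) (fun g => by exact (Category.comp_id _).trans (Category.id_comp _).symm))

theorem ind_isLeftKanExtension_of_preserves (F : Ind C ⥤ D) [PreservesFilteredColimits F] :
    F.IsLeftKanExtension (𝟙 (Ind.yoneda ⋙ F) : Ind.yoneda ⋙ F ⟶ Ind.yoneda ⋙ F) :=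
  (indIsPointwiseLKE F).isLeftKanExtension

theorem ind_preserves_of_isLeftKanExtension (F : Ind C ⥤ D)
    [F.IsLeftKanExtension (𝟙 (Ind.yoneda ⋙ F) : Ind.yoneda ⋙ F ⟶ Ind.yoneda ⋙ F)] :
    PreservesFilteredColimits F := by
  have h := Functor.isPointwiseLeftKanExtensionOfIsLeftKanExtension F
    (𝟙 (Ind.yoneda ⋙ F) : Ind.yoneda ⋙ F ⟶ Ind.yoneda ⋙ F)
  constructor
  intro J _ _
  constructor
  intro K
  have hc := colimit.isColimit K
  -- the choice of lifts
  have exlift : ∀ {A : C} (g : Ind.yoneda.obj A ⟶ colimit K),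
      ∃ (j : J) (g' : Ind.yoneda.obj A ⟶ K.obj j), g' ≫ colimit.ι K j = g :=
    fun g => ind_exists_lift hc g
  let μ : ∀ {A : C} (_ : Ind.yoneda.obj A ⟶ colimit K),
      F.obj (Ind.yoneda.obj A) ⟶ colimit (K ⋙ F) := fun g =>
    F.map (exlift g).choose_spec.choose ≫ colimit.ι (K ⋙ F) (exlift g).choose
  have μ_eq : ∀ {A : C} (g : Ind.yoneda.obj A ⟶ colimit K) (j : J)
      (g' : Ind.yoneda.obj A ⟶ K.obj j) (_ : g' ≫ colimit.ι K j = g),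
      μ g = F.map g' ≫ colimit.ι (K ⋙ F) j := by
    intro A g j g' hg'
    obtain ⟨k, φ, φ', hk⟩ := ind_lift_eq hc
      ((exlift g).choose_spec.choose_spec.trans hg'.symm)
    show F.map (exlift g).choose_spec.choose ≫ colimit.ι (K ⋙ F) (exlift g).choose = _
    rw [← colimit.w (K ⋙ F) φ, ← colimit.w (K ⋙ F) φ', ← Category.assoc, ← Category.assoc,
      Functor.comp_map, Functor.comp_map, ← F.map_comp, ← F.map_comp, hk]
  -- the inverse of the comparison morphism
  let ν : CostructuredArrow.proj Ind.yoneda (colimit K) ⋙ (Ind.yoneda ⋙ F) ⟶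
      (Functor.const _).obj (colimit (K ⋙ F)) :=
    { app := fun g => μ g.hom
      naturality := fun g g' ψ => by
        change _ ≫ μ g'.hom = μ g.hom ≫ _
        obtain ⟨j', g'', hg''⟩ := exlift g'.hom
        rw [μ_eq g'.hom j' g'' hg'',
          μ_eq g.hom j' (Ind.yoneda.map ψ.left ≫ g'')
            (by rw [Category.assoc, hg'']; exact CostructuredArrow.w ψ)]
        simp; rfl }
  let s : F.obj (colimit K) ⟶ colimit (K ⋙ F) := (h (colimit K)).desc ⟨_, ν⟩
  have hs : ∀ (g : CostructuredArrow Ind.yoneda (colimit K)),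
      F.map g.hom ≫ s = μ g.hom := fun g => by
    have := (h (colimit K)).fac ⟨_, ν⟩ g
    rw [show ((Functor.LeftExtension.mk F (𝟙 (Ind.yoneda ⋙ F))).coconeAt (colimit K)).ι.app g = F.map g.hom from Category.id_comp _] at this
    exact this
  let d : colimit (K ⋙ F) ⟶ F.obj (colimit K) :=
    colimit.desc (K ⋙ F) (F.mapCocone (colimit.cocone K))
  have hι : ∀ j, colimit.ι (K ⋙ F) j ≫ d = F.map (colimit.ι K j) := fun j => by
    simp [d]
  have hx : ∀ (X : Ind C) {T : D} (u v : F.obj X ⟶ T),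
      (∀ (g : CostructuredArrow (Ind.yoneda (C := C)) X),
        F.map g.hom ≫ u = F.map g.hom ≫ v) → u = v := by
    intro X T u v w
    apply (h X).hom_ext
    intro g
    have w' : (𝟙 (F.obj (Ind.yoneda.obj g.left)) ≫ F.map g.hom) ≫ u
        = (𝟙 (F.obj (Ind.yoneda.obj g.left)) ≫ F.map g.hom) ≫ v := by
      rw [Category.id_comp]
      exact w g
    exact w'
  have e1 : d ≫ s = 𝟙 (colimit (K ⋙ F)) := by
    apply colimit.hom_ext
    intro j
    rw [Category.comp_id, ← Category.assoc, hι j]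
    apply hx (K.obj j)
    intro g
    rw [← Category.assoc, ← F.map_comp]
    have h2 := hs (CostructuredArrow.mk (g.hom ≫ colimit.ι K j))
    rw [μ_eq _ j g.hom rfl] at h2
    exact h2
  have e2 : s ≫ d = 𝟙 (F.obj (colimit K)) := by
    apply hx (colimit K)
    intro g
    have key : F.map g.hom ≫ s ≫ d = F.map g.hom := by
      obtain ⟨j, g', hg'⟩ := exlift g.hom
      rw [← Category.assoc, hs g, μ_eq g.hom j g' hg', Category.assoc, hι j, ← F.map_comp, hg']
    exact key.trans (Category.comp_id (F.map g.hom)).symm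
  exact preservesColimit_of_preserves_colimit_cocone hc
    (IsColimit.ofIsoColimit (colimit.isColimit (K ⋙ F))
      (Cocones.ext (Iso.mk d s e1 e2) (fun j => hι j)))

end Main

/-- For a small category `C` and a category `D` with all filtered colimits, a functor
`F : Ind C ⥤ D` preserves filtered colimits if and only if `F`, together with the identity
natural transformation on `Ind.yoneda ⋙ F`, is a left Kan extension of `Ind.yoneda ⋙ F`
along `Ind.yoneda : C ⥤ Ind C`. In particular, two filtered-colimit-preserving functors
`Ind C ⥤ D` whose composites with `Ind.yoneda` are naturally isomorphic are themselves
naturally isomorphic. -/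
theorem ind_preservesFilteredColimits_iff_isLeftKanExtension
    {C : Type v} [SmallCategory C] {D : Type u} [Category.{v} D] [HasFilteredColimits D] :
    (∀ F : Ind C ⥤ D,
      PreservesFilteredColimits F ↔
        F.IsLeftKanExtension (𝟙 (Ind.yoneda ⋙ F) : Ind.yoneda ⋙ F ⟶ Ind.yoneda ⋙ F)) ∧
    (∀ F G : Ind C ⥤ D, PreservesFilteredColimits F → PreservesFilteredColimits G →
      (Ind.yoneda ⋙ F ≅ Ind.yoneda ⋙ G) → Nonempty (F ≅ G)) := by
  constructor
  · intro F
    constructor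
    · intro hF
      exact ind_isLeftKanExtension_of_preserves F
    · intro hF
      exact ind_preserves_of_isLeftKanExtension F
  · intro F G hF hG i
    have : F.IsLeftKanExtension (𝟙 (Ind.yoneda ⋙ F)) := ind_isLeftKanExtension_of_preserves F
    have : G.IsLeftKanExtension (𝟙 (Ind.yoneda ⋙ G)) := ind_isLeftKanExtension_of_preserves G
    exact ⟨Functor.leftKanExtensionUniqueOfIso F (𝟙 (Ind.yoneda ⋙ F)) i G (𝟙 (Ind.yoneda ⋙ G))⟩
end

section
/- Let C be a small category, and let A be a category with all filtered colimits equipped with a fully faithful functor i : A ⥤ Ind C which preserves filtered colimits and admits a left adjoint L : Ind C ⥤ A. Then A is equivalent to Ind C' for a small category C'; one may take C' to be the (essentially small) full subcategory of A spanned by the objects L(Ind.yoneda(c)) for c an object of C. -/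
open CategoryTheory Limits Opposite

universe v u

set_option linter.unusedSectionVars false
namespace EquivIndAux

variable {C : Type v} [SmallCategory C]
  {A : Type u} [Category.{v} A] [HasFilteredColimits A]

/-- The predicate cutting out the full subcategory `C'`. -/
abbrev Pred (L : Ind C ⥤ A) : A → Prop := fun a => ∃ c : C, L.obj (Ind.yoneda.obj c) = a

/-- `Hom(yc, -) ≅ ev_c ∘ inclusion` on `Ind C`. -/
noncomputable def indCoyonedaIso (c : C) :
    coyoneda.obj (op (Ind.yoneda.obj c)) ≅
      Ind.inclusion C ⋙ (evaluation Cᵒᵖ (Type v)).obj (op c) :=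
  NatIso.ofComponents
    (fun X => Equiv.toIso <|
      Ind.inclusion.fullyFaithful.homEquiv.trans <|
        (Ind.yonedaCompInclusion.app c).homFromEquiv.trans yonedaEquiv)
    (fun f => by
      ext g
      dsimp [Iso.homFromEquiv]
      simp [yonedaEquiv_apply])

noncomputable def adjCoyonedaIso (i : A ⥤ Ind C) (L : Ind C ⥤ A) (adj : L ⊣ i) (Y : Ind C) :
    coyoneda.obj (op (L.obj Y)) ≅ i ⋙ coyoneda.obj (op Y) :=
  NatIso.ofComponents (fun a => Equiv.toIso (adj.homEquiv Y a))
    (fun f => by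
      ext g
      exact adj.homEquiv_naturality_right _ _)

/-- Local replacement for the removed `Presheaf.restrictedYoneda`. -/
@[simps]
def Presheaf.restrictedYoneda {ℰ : Type*} [Category.{v} ℰ] {D : Type*} [Category.{v} D]
    (K : D ⥤ ℰ) : ℰ ⥤ Dᵒᵖ ⥤ Type v :=
  yoneda ⋙ (Functor.whiskeringLeft _ _ (Type v)).obj K.op

variable (L : Ind C ⥤ A)

noncomputable def k_comp_r' :
    ObjectProperty.ι (Pred L) ⋙
      Presheaf.restrictedYoneda (ObjectProperty.ι (Pred L)) ≅ yoneda :=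
  NatIso.ofComponents
    (fun X => NatIso.ofComponents
      (fun Y => Equiv.toIso (ObjectProperty.fullyFaithfulι _).homEquiv.symm) (by intros; rfl))
    (by intros; rfl)

variable (i : A ⥤ Ind C) [i.Full] [i.Faithful] [PreservesFilteredColimits i]
  (adj : L ⊣ i)

include i adj

lemma preserves_of_mem (x : A) (hx : Pred L x)
    (J : Type v) [SmallCategory J] [IsFiltered J] :
    PreservesColimitsOfShape J (coyoneda.obj (op x)) := by
  obtain ⟨c, rfl⟩ := hx
  haveI : PreservesColimitsOfShape J (coyoneda.obj (op (Ind.yoneda.obj c))) :=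
    preservesColimitsOfShape_of_natIso (indCoyonedaIso c).symm
  exact preservesColimitsOfShape_of_natIso (adjCoyonedaIso i L adj (Ind.yoneda.obj c)).symm

lemma rPreserves (J : Type v) [SmallCategory J] [IsFiltered J] :
    PreservesColimitsOfShape J (Presheaf.restrictedYoneda (ObjectProperty.ι (Pred L))) := by
  apply preservesColimitsOfShape_of_evaluation
  intro x
  haveI := preserves_of_mem L i adj _ x.unop.2 J
  exact preservesColimitsOfShape_of_natIso
    (F := coyoneda.obj (op x.unop.obj))
    (NatIso.ofComponents (fun a => Iso.refl _) (by aesop_cat))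

lemma exists_colimit_rep (a : A) :
    ∃ (J : Type v) (_ : SmallCategory J) (_ : IsFiltered J)
      (G : J ⥤ ObjectProperty.FullSubcategory (Pred L)),
      Nonempty (colimit (G ⋙ ObjectProperty.ι (Pred L)) ≅ a) := by
  haveI : PreservesColimitsOfSize.{v, v} L := adj.leftAdjoint_preservesColimits
  let pres := (i.obj a).presentation
  refine ⟨pres.I, inferInstance, inferInstance,
    pres.F ⋙ ObjectProperty.lift (Pred L) (Ind.yoneda ⋙ L) (fun c => ⟨c, rfl⟩), ⟨?_⟩⟩
  calc colimit ((pres.F ⋙ ObjectProperty.lift (Pred L) (Ind.yoneda ⋙ L) (fun c => ⟨c, rfl⟩)) ⋙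
          ObjectProperty.ι (Pred L))
      ≅ colimit ((pres.F ⋙ Ind.yoneda) ⋙ L) :=
        HasColimit.isoOfNatIso (eqToIso rfl)
    _ ≅ L.obj (colimit (pres.F ⋙ Ind.yoneda)) := (preservesColimitIso L _).symm
    _ ≅ L.obj (i.obj a) := L.mapIso (Ind.colimitPresentationCompYoneda _)
    _ ≅ a := asIso (adj.counit.app a)

lemma r_isIndObject (a : A) :
    IsIndObject ((Presheaf.restrictedYoneda (ObjectProperty.ι (Pred L))).obj a) := by
  obtain ⟨J, _, _, G, ⟨t⟩⟩ := exists_colimit_rep L i adj a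
  haveI := rPreserves L i adj J
  let R := Presheaf.restrictedYoneda (ObjectProperty.ι (Pred L))
  have h : IsIndObject (colimit (G ⋙ yoneda (C := ObjectProperty.FullSubcategory (Pred L)))) :=
    isIndObject_colimit J _ (fun j => isIndObject_yoneda _)
  have hEq : (G ⋙ ObjectProperty.ι (Pred L)) ⋙ R ≅ G ⋙ yoneda :=
    Functor.associator _ _ _ ≪≫ Functor.isoWhiskerLeft G (k_comp_r' L)
  exact h.map ((HasColimit.isoOfNatIso hEq).symm ≪≫
    (preservesColimitIso R (G ⋙ ObjectProperty.ι (Pred L))).symm ≪≫ R.mapIso t).hom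

lemma r_faithful :
    (Presheaf.restrictedYoneda (ObjectProperty.ι (Pred L))).Faithful := by
  constructor
  intro a b f g h
  obtain ⟨J, _, _, G, ⟨t⟩⟩ := exists_colimit_rep L i adj a
  rw [← cancel_epi t.hom]
  apply colimit.hom_ext
  intro j
  have := types_congr_hom (NatTrans.congr_app h (op (G.obj j)))
    (colimit.ι (G ⋙ ObjectProperty.ι (Pred L)) j ≫ t.hom : (G.obj j).obj ⟶ a)
  have h2 : (colimit.ι (G ⋙ ObjectProperty.ι (Pred L)) j ≫ t.hom) ≫ f =
    (colimit.ι (G ⋙ ObjectProperty.ι (Pred L)) j ≫ t.hom) ≫ g := this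
  simpa using h2

lemma r_full :
    (Presheaf.restrictedYoneda (ObjectProperty.ι (Pred L))).Full := by
  constructor
  intro a b η
  obtain ⟨J, _, _, G, ⟨t⟩⟩ := exists_colimit_rep L i adj a
  let K := ObjectProperty.ι (Pred L)
  let s : Cocone (G ⋙ K) :=
    { pt := b
      ι :=
        { app := fun j => η.app (op (G.obj j)) (colimit.ι (G ⋙ K) j ≫ t.hom)
          naturality := fun j j' φ => by
            dsimp only [Functor.const_obj_map]
            have hci := Category.comp_id
              (η.app (op (G.obj j)) (colimit.ι (G ⋙ K) j ≫ t.hom))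
            rw [hci, ← colimit.w (G ⋙ K) φ, Category.assoc]
            exact (types_congr_hom (η.naturality (G.map φ).op)
              (colimit.ι (G ⋙ K) j' ≫ t.hom : (G.obj j').obj ⟶ a)).symm } }
  refine ⟨t.inv ≫ colimit.desc _ s, ?_⟩
  ext x h
  change K.obj x.unop ⟶ a at h
  haveI : PreservesColimitsOfShape J (coyoneda.obj (op (K.obj x.unop))) :=
    preserves_of_mem L i adj _ x.unop.2 J
  obtain ⟨j, u, hu⟩ := Types.jointly_surjective _
    (isColimitOfPreserves (coyoneda.obj (op (K.obj x.unop))) (colimit.isColimit (G ⋙ K)))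
    (h ≫ t.inv)
  dsimp at hu
  have hh : h = u ≫ colimit.ι (G ⋙ K) j ≫ t.hom := by
    rw [← Category.assoc, hu, Category.assoc, t.inv_hom_id, Category.comp_id]
  let u' : x.unop ⟶ G.obj j := ObjectProperty.homMk u
  have hnat := types_congr_hom (η.naturality u'.op) (colimit.ι (G ⋙ K) j ≫ t.hom : (G.obj j).obj ⟶ a)
  dsimp at hnat
  change h ≫ t.inv ≫ colimit.desc (G ⋙ K) s = η.app x h
  rw [hh]
  simp only [Category.assoc, t.hom_inv_id_assoc, colimit.ι_desc]
  exact hnat.symm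

end EquivIndAux

open EquivIndAux

/-- Let `C` be a small category and `A` a category with all filtered colimits, equipped with a
fully faithful functor `i : A ⥤ Ind C` preserving filtered colimits and admitting a left
adjoint `L`. Then `A` is equivalent to `Ind C'`, where `C'` is the (essentially small) full
subcategory of `A` spanned by the objects `L (Ind.yoneda c)` for `c : C`. -/
theorem equiv_ind_of_reflective {C : Type v} [SmallCategory C]
    {A : Type u} [Category.{v} A] [HasFilteredColimits A]
    (i : A ⥤ Ind C) [i.Full] [i.Faithful] [PreservesFilteredColimits i]
    (L : Ind C ⥤ A) (adj : L ⊣ i) :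
    EssentiallySmall.{v}
        (ObjectProperty.FullSubcategory (fun a : A => ∃ c : C, L.obj (Ind.yoneda.obj c) = a)) ∧
      Nonempty
        (A ≌ Ind (ObjectProperty.FullSubcategory (fun a : A => ∃ c : C, L.obj (Ind.yoneda.obj c) = a))) := by
  constructor
  · rw [essentiallySmall_iff]
    refine ⟨?_, inferInstance⟩
    refine small_of_surjective
      (f := fun c : C => toSkeleton (⟨L.obj (Ind.yoneda.obj c), c, rfl⟩ :
        ObjectProperty.FullSubcategory (fun a : A => ∃ c : C, L.obj (Ind.yoneda.obj c) = a))) ?_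
    intro q
    obtain ⟨X, rfl⟩ := Quotient.exists_rep q
    obtain ⟨c, hc⟩ := X.2
    refine ⟨c, ?_⟩
    have : (⟨L.obj (Ind.yoneda.obj c), c, rfl⟩ :
        ObjectProperty.FullSubcategory (fun a : A => ∃ c : C, L.obj (Ind.yoneda.obj c) = a)) = X := by
      cases X
      simp only [ObjectProperty.FullSubcategory.mk.injEq] at *
      exact hc
    exact congrArg toSkeleton this
  · let R := Presheaf.restrictedYoneda (ObjectProperty.ι (Pred L))
    let R' := ObjectProperty.lift (IsIndObject (C := ObjectProperty.FullSubcategory (Pred L))) R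
      (r_isIndObject L i adj)
    haveI : R.Faithful := r_faithful L i adj
    haveI : R.Full := r_full L i adj
    haveI : R'.Faithful := inferInstance
    haveI : R'.Full := inferInstance
    haveI : R'.EssSurj := by
      constructor
      intro X
      let pres := X.2.presentation
      haveI := rPreserves L i adj pres.I
      refine ⟨colimit (pres.F ⋙ ObjectProperty.ι (Pred L)), ⟨?_⟩⟩
      refine (ObjectProperty.ι (IsIndObject (C := ObjectProperty.FullSubcategory (Pred L)))).preimageIso ?_
      refine (preservesColimitIso R _) ≪≫ ?_ ≪≫
        (colimit.isColimit _).coconePointUniqueUpToIso pres.coconeIsColimit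
      exact HasColimit.isoOfNatIso (Functor.associator _ _ _ ≪≫ Functor.isoWhiskerLeft _ (k_comp_r' L))
    haveI : R'.IsEquivalence := {}
    exact ⟨R'.asEquivalence.trans (Ind.equivalence _).symm⟩
end

section
/- Let C be a small category with all finite limits, and let Lex(C, Type) denote the full subcategory of the functor category C ⥤ Type spanned by the finite-limit-preserving functors. Then: (a) the inclusion Lex(C, Type) ⥤ (C ⥤ Type) admits a left adjoint (i.e. Lex(C, Type) is a reflective subcategory); and (b) Lex(C, Type) is closed under filtered colimits in C ⥤ Type, so that the inclusion creates and preserves filtered colimits. -/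
open CategoryTheory Limits

universe v

/-- The old Mathlib notion: `P` is closed under colimits of shape `J`. -/
def ClosedUnderColimitsOfShape {C : Type*} [Category C] (J : Type*) [Category J]
    (P : C → Prop) : Prop :=
  ∀ ⦃F : J ⥤ C⦄ ⦃c : Cocone F⦄ (_hc : IsColimit c), (∀ j, P (F.obj j)) → P c.pt

/-- The old Mathlib notion: `P` is closed under limits of shape `J`. -/
def ClosedUnderLimitsOfShape {C : Type*} [Category C] (J : Type*) [Category J]
    (P : C → Prop) : Prop :=
  ∀ ⦃F : J ⥤ C⦄ ⦃c : Cone F⦄ (_hc : IsLimit c), (∀ j, P (F.obj j)) → P c.pt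

set_option linter.unusedSectionVars false

section Auxiliary

variable {C : Type v} [SmallCategory C]

section ShapeClosure

variable {J : Type v} [SmallCategory J]

/-- Lex functors are closed under (small) limits in the functor category. -/
theorem lex_closedUnderLimits :
    ClosedUnderLimitsOfShape J (fun F : C ⥤ Type v => PreservesFiniteLimits F) := by
  intro D c hc hD
  have : PreservesFiniteLimits D.flip := by
    apply preservesFiniteLimits_of_evaluation
    intro j
    haveI : PreservesFiniteLimits (D.obj j) := hD j
    exact preservesFiniteLimits_of_natIso (flipCompEvaluation D j).symm
  have hlim : PreservesFiniteLimits (lim : (J ⥤ Type v) ⥤ Type v) := by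
    have : PreservesLimitsOfSize.{v, v} (lim : (J ⥤ Type v) ⥤ Type v) :=
      (constLimAdj).rightAdjoint_preservesLimits
    infer_instance
  have h1 : PreservesFiniteLimits (D.flip ⋙ lim) := comp_preservesFiniteLimits _ _
  have h2 : PreservesFiniteLimits (limit D) :=
    preservesFiniteLimits_of_natIso (limitIsoFlipCompLim D).symm
  haveI := h2
  haveI : PreservesFiniteLimits ((limit.cone D).pt) := h2
  exact preservesFiniteLimits_of_natIso
    (IsLimit.conePointUniqueUpToIso (limit.isLimit D) hc)

/-- Lex functors are closed under filtered colimits in the functor category. -/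
theorem lex_closedUnderFilteredColimits [IsFiltered J] :
    ClosedUnderColimitsOfShape J (fun F : C ⥤ Type v => PreservesFiniteLimits F) := by
  intro D c hc hD
  have : PreservesFiniteLimits D.flip := by
    apply preservesFiniteLimits_of_evaluation
    intro j
    haveI : PreservesFiniteLimits (D.obj j) := hD j
    exact preservesFiniteLimits_of_natIso (flipCompEvaluation D j).symm
  have h1 : PreservesFiniteLimits (D.flip ⋙ colim) := comp_preservesFiniteLimits _ _
  have h2 : PreservesFiniteLimits (colimit D) :=
    preservesFiniteLimits_of_natIso (colimitIsoFlipCompColim D).symm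
  haveI := h2
  haveI : PreservesFiniteLimits ((colimit.cocone D).pt) := h2
  exact preservesFiniteLimits_of_natIso
    (IsColimit.coconePointUniqueUpToIso (colimit.isColimit D) hc)

end ShapeClosure

variable [HasFiniteLimits C]

section LFacts
variable (L : C ⥤ Type v) [PreservesFiniteLimits L]
theorem lex_exu {J : Type} [SmallCategory J] [FinCategory J] (K : J ⥤ C)
    (s : ∀ j, L.obj (K.obj j)) (hs : ∀ {j j'} (f : j ⟶ j'), L.map (K.map f) (s j) = s j') :
    ∃! x : L.obj (limit K), ∀ j, L.map (limit.π K j) x = s j := by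
  have hL := (Types.isLimit_iff (L.mapCone (limit.cone K))).mp
    ⟨isLimitOfPreserves L (limit.isLimit K)⟩ (fun j => s j) (fun {j j'} f => hs f)
  exact hL
theorem lex_prod_exu (X Y : C) (u : L.obj X) (v : L.obj Y) :
    ∃! x : L.obj (X ⨯ Y), L.map prod.fst x = u ∧ L.map prod.snd x = v := by
  let s : ∀ j : Discrete WalkingPair, L.obj ((pair X Y).obj j) := fun j =>
    match j with
    | ⟨WalkingPair.left⟩ => u
    | ⟨WalkingPair.right⟩ => v
  have := lex_exu L (pair X Y) s ?_
  · obtain ⟨x, hx, hx'⟩ := this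
    refine ⟨x, ⟨hx ⟨WalkingPair.left⟩, hx ⟨WalkingPair.right⟩⟩, fun y hy => hx' y ?_⟩
    rintro ⟨(_ | _)⟩
    exacts [hy.1, hy.2]
  · rintro ⟨j⟩ ⟨j'⟩ f
    obtain rfl : j = j' := Discrete.eq_of_hom f
    obtain rfl : f = 𝟙 _ := Subsingleton.elim _ _
    cases j <;> simp [s] <;> rfl
theorem lex_terminal_subsingleton : Subsingleton (L.obj (⊤_ C)) := by
  constructor
  intro x y
  have := lex_exu L (Functor.empty.{0} C) (fun j => j.as.elim) (by rintro ⟨⟨⟩⟩)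
  obtain ⟨z, -, hz⟩ := this
  rw [hz x (by rintro ⟨⟨⟩⟩), hz y (by rintro ⟨⟨⟩⟩)]
theorem lex_eq_exu {X Y : C} (f g : X ⟶ Y) (y : L.obj X) (hy : L.map f y = L.map g y) :
    ∃! x : L.obj (equalizer f g), L.map (equalizer.ι f g) x = y := by
  let s : ∀ j : WalkingParallelPair, L.obj ((parallelPair f g).obj j) := fun j =>
    match j with
    | WalkingParallelPair.zero => y
    | WalkingParallelPair.one => L.map f y
  have := lex_exu L (parallelPair f g) s ?_
  · obtain ⟨x, hx, hx'⟩ := this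
    refine ⟨x, hx WalkingParallelPair.zero, fun z hz => hx' z ?_⟩
    rintro (_ | _)
    · exact hz
    · show L.map (limit.π (parallelPair f g) WalkingParallelPair.one) z = L.map f y
      rw [show limit.π (parallelPair f g) WalkingParallelPair.one
          = equalizer.ι f g ≫ f from (limit.w (parallelPair f g) WalkingParallelPairHom.left).symm,
        FunctorToTypes.map_comp_apply, hz]
  · rintro _ _ (_ | _ | _) <;> simp [s, hy.symm]
end LFacts

section Closure

variable {A L : C ⥤ Type v} (h : A ⟶ L)

/-- The smallest "lex-closed" collection of elements of `L` containing the image of `h`. -/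
inductive LexMem : ∀ c : C, L.obj c → Prop
  | img (c : C) (a : A.obj c) : LexMem c (h.app c a)
  | map {c c' : C} (g : c ⟶ c') {x : L.obj c} : LexMem c x → LexMem c' (L.map g x)
  | unit (x : L.obj (⊤_ C)) : LexMem (⊤_ C) x
  | pair {X Y : C} (x : L.obj (X ⨯ Y)) :
      LexMem X (L.map prod.fst x) → LexMem Y (L.map prod.snd x) → LexMem (X ⨯ Y) x
  | eq {X Y : C} (f g : X ⟶ Y) (x : L.obj (equalizer f g)) :
      LexMem X (L.map (equalizer.ι f g) x) → LexMem (equalizer f g) x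

/-- The subfunctor of `L` spanned by `LexMem`. -/
@[simps]
def lexClosure : C ⥤ Type v where
  obj c := { x : L.obj c // LexMem h c x }
  map g := TypeCat.ofHom fun x => ⟨L.map g x.1, LexMem.map g x.2⟩
  map_id c := by ext x; exact FunctorToTypes.map_id_apply L x.1
  map_comp g g' := by ext x; exact FunctorToTypes.map_comp_apply L g g' x.1

variable [PreservesFiniteLimits L]

theorem lexClosure_preservesFiniteLimits : PreservesFiniteLimits (lexClosure h) := by
  have hterm : PreservesLimitsOfShape (Discrete PEmpty.{1}) (lexClosure h) := by
    have : PreservesLimit (Functor.empty.{0} C) (lexClosure h) := by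
      apply preservesLimit_of_preserves_limit_cone (limit.isLimit (Functor.empty.{0} C))
      refine Nonempty.some ?_
      rw [Types.isLimit_iff]
      rintro s -
      have hsub := lex_terminal_subsingleton L
      obtain ⟨z, -, -⟩ := lex_exu L (Functor.empty.{0} C) (fun j => j.as.elim) (by rintro ⟨⟨⟩⟩)
      exact ⟨⟨z, LexMem.unit z⟩, by rintro ⟨⟨⟩⟩, fun y _ => Subtype.ext (hsub.elim y.1 z)⟩
    constructor
    intro K
    exact preservesLimit_of_iso_diagram _ (Functor.emptyExt (Functor.empty.{0} C) K)
  have hpair : ∀ X Y : C, PreservesLimit (pair X Y) (lexClosure h) := by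
    intro X Y
    apply preservesLimit_of_preserves_limit_cone (limit.isLimit (pair X Y))
    refine Nonempty.some ?_
    rw [Types.isLimit_iff]
    rintro s hs
    obtain ⟨x, ⟨hx1, hx2⟩, hx'⟩ :=
      lex_prod_exu L X Y (s ⟨WalkingPair.left⟩).1 (s ⟨WalkingPair.right⟩).1
    have hmem : LexMem h (X ⨯ Y) x := by
      refine LexMem.pair x ?_ ?_
      · rw [hx1]; exact (s ⟨WalkingPair.left⟩).2
      · rw [hx2]; exact (s ⟨WalkingPair.right⟩).2
    refine ⟨⟨x, hmem⟩, ?_, ?_⟩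
    · rintro ⟨(_ | _)⟩ <;> exact Subtype.ext (by assumption)
    · rintro ⟨y, hy⟩ hy'
      refine Subtype.ext (hx' y ⟨?_, ?_⟩)
      · exact congr_arg Subtype.val (hy' ⟨WalkingPair.left⟩)
      · exact congr_arg Subtype.val (hy' ⟨WalkingPair.right⟩)
  have heq : ∀ {X Y : C} (f g : X ⟶ Y), PreservesLimit (parallelPair f g) (lexClosure h) := by
    intro X Y f g
    apply preservesLimit_of_preserves_limit_cone (limit.isLimit (parallelPair f g))
    refine Nonempty.some ?_
    rw [Types.isLimit_iff]
    rintro s hs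
    have hcond : L.map f (s WalkingParallelPair.zero).1 = L.map g (s WalkingParallelPair.zero).1 := by
      have h1 := congr_arg Subtype.val (hs WalkingParallelPairHom.left)
      have h2 := congr_arg Subtype.val (hs WalkingParallelPairHom.right)
      exact h1.trans h2.symm
    obtain ⟨x, hx, hx'⟩ := lex_eq_exu L f g (s WalkingParallelPair.zero).1 hcond
    have hmem : LexMem h (equalizer f g) x := by
      refine LexMem.eq f g x ?_
      rw [hx]; exact (s WalkingParallelPair.zero).2
    refine ⟨⟨x, hmem⟩, ?_, ?_⟩
    · rintro (_ | _)
      · exact Subtype.ext hx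
      · refine Subtype.ext ?_
        have := congr_arg Subtype.val (hs WalkingParallelPairHom.left)
        rw [← this]
        show L.map (limit.π (parallelPair f g) WalkingParallelPair.one) _ = _
        rw [show limit.π (parallelPair f g) WalkingParallelPair.one
            = equalizer.ι f g ≫ f from
              (limit.w (parallelPair f g) WalkingParallelPairHom.left).symm]
        rw [FunctorToTypes.map_comp_apply, hx]
        rfl
    · rintro ⟨y, hy⟩ hy'
      exact Subtype.ext (hx' y (congr_arg Subtype.val (hy' WalkingParallelPair.zero)))
  have : PreservesLimitsOfShape WalkingParallelPair (lexClosure h) := by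
    constructor
    intro K
    exact preservesLimit_of_iso_diagram _ (diagramIsoParallelPair K).symm
  have : PreservesLimitsOfShape (Discrete WalkingPair) (lexClosure h) := by
    constructor
    intro K
    exact preservesLimit_of_iso_diagram _ (diagramIsoPair K).symm
  have : PreservesFiniteProducts (lexClosure h) := by
    exact PreservesFiniteProducts.of_preserves_binary_and_terminal _
  exact preservesFiniteLimits_of_preservesEqualizers_and_finiteProducts _

end Closure

section Codes

/-- Term codes for elements of the lex closure. Depends only on `C` and `A`. -/
inductive LexCode (A : C ⥤ Type v) : Type v
  | gen : (Σ c : C, A.obj c) → LexCode A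
  | map : (Σ c : C, Σ c' : C, c ⟶ c') → LexCode A → LexCode A
  | unit : LexCode A
  | pair : C → C → LexCode A → LexCode A → LexCode A
  | eq : (Σ X : C, Σ Y : C, (X ⟶ Y) × (X ⟶ Y)) → LexCode A → LexCode A

variable {A L : C ⥤ Type v} (h : A ⟶ L)

/-- Decoding a term code to an element of `L`. -/
inductive LexDecode : LexCode A → ∀ c : C, L.obj c → Prop
  | gen (c : C) (a : A.obj c) : LexDecode (.gen ⟨c, a⟩) c (h.app c a)
  | map {c c' : C} (g : c ⟶ c') {t : LexCode A} {x : L.obj c} :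
      LexDecode t c x → LexDecode (.map ⟨c, c', g⟩ t) c' (L.map g x)
  | unit (x : L.obj (⊤_ C)) : LexDecode .unit (⊤_ C) x
  | pair {X Y : C} {t₁ t₂ : LexCode A} (x : L.obj (X ⨯ Y)) :
      LexDecode t₁ X (L.map prod.fst x) → LexDecode t₂ Y (L.map prod.snd x) →
        LexDecode (.pair X Y t₁ t₂) (X ⨯ Y) x
  | eq {X Y : C} (f g : X ⟶ Y) {t : LexCode A} (x : L.obj (equalizer f g)) :
      LexDecode t X (L.map (equalizer.ι f g) x) → LexDecode (.eq ⟨X, Y, f, g⟩ t) (equalizer f g) x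

theorem LexMem.exists_code {c : C} {x : L.obj c} (hx : LexMem h c x) :
    ∃ t : LexCode A, LexDecode h t c x := by
  induction hx with
  | img c a => exact ⟨.gen ⟨c, a⟩, .gen c a⟩
  | map g _ ih => obtain ⟨t, ht⟩ := ih; exact ⟨.map ⟨_, _, g⟩ t, .map g ht⟩
  | unit x => exact ⟨.unit, .unit x⟩
  | pair x _ _ ih₁ ih₂ =>
      obtain ⟨t₁, ht₁⟩ := ih₁; obtain ⟨t₂, ht₂⟩ := ih₂
      exact ⟨.pair _ _ t₁ t₂, .pair x ht₁ ht₂⟩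
  | eq f g x _ ih => obtain ⟨t, ht⟩ := ih; exact ⟨.eq ⟨_, _, f, g⟩ t, .eq f g x ht⟩

variable [PreservesFiniteLimits L]

theorem lex_prod_inj {X Y : C} {x y : L.obj (X ⨯ Y)}
    (h1 : L.map prod.fst x = L.map prod.fst y) (h2 : L.map prod.snd x = L.map prod.snd y) :
    x = y := by
  obtain ⟨z, -, hz⟩ := lex_prod_exu L X Y (L.map prod.fst x) (L.map prod.snd x)
  rw [hz x ⟨rfl, rfl⟩, hz y ⟨h1.symm, h2.symm⟩]

theorem lex_eq_inj {X Y : C} {f g : X ⟶ Y} {x y : L.obj (equalizer f g)}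
    (h1 : L.map (equalizer.ι f g) x = L.map (equalizer.ι f g) y) : x = y := by
  have hc : L.map f (L.map (equalizer.ι f g) x) = L.map g (L.map (equalizer.ι f g) x) := by
    rw [← FunctorToTypes.map_comp_apply, ← FunctorToTypes.map_comp_apply, equalizer.condition]
  obtain ⟨z, -, hz⟩ := lex_eq_exu L f g (L.map (equalizer.ι f g) x) hc
  rw [hz x rfl, hz y h1.symm]

theorem LexDecode.unique : ∀ {t : LexCode A} {c : C} {x y : L.obj c},
    LexDecode h t c x → LexDecode h t c y → x = y := by
  intro t c x y hx
  induction hx with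
  | gen c a => intro hy; cases hy; rfl
  | map g hx ih =>
      intro hy
      cases hy with
      | map g' hy => exact congr_arg (L.map g) (ih hy)
  | unit x => intro hy; exact (lex_terminal_subsingleton L).elim _ _
  | pair x hx1 hx2 ih1 ih2 =>
      intro hy
      cases hy with
      | pair y hy1 hy2 => exact lex_prod_inj (ih1 hy1) (ih2 hy2)
  | eq f g x hx ih =>
      intro hy
      cases hy with
      | eq f g y hy => exact lex_eq_inj (ih hy)

end Codes

section CodeData

variable (A : C ⥤ Type v)

/-- Raw data for a functor carved out of the type of codes. -/
structure LexCodeData : Type v where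
  obj : C → Set (LexCode A)
  map : ∀ {c c' : C}, (c ⟶ c') → LexCode A → LexCode A
  app : ∀ c : C, A.obj c → LexCode A

variable {A}

/-- Validity of code data. -/
structure LexCodeValid (d : LexCodeData A) : Prop where
  mem_map : ∀ {c c' : C} (g : c ⟶ c') {t}, t ∈ d.obj c → d.map g t ∈ d.obj c'
  map_id : ∀ (c : C) {t}, t ∈ d.obj c → d.map (𝟙 c) t = t
  map_comp : ∀ {c c' c'' : C} (g : c ⟶ c') (g' : c' ⟶ c'') {t}, t ∈ d.obj c →
    d.map (g ≫ g') t = d.map g' (d.map g t)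
  app_mem : ∀ (c : C) (a : A.obj c), d.app c a ∈ d.obj c
  app_natural : ∀ {c c' : C} (g : c ⟶ c') (a : A.obj c),
    d.app c' (A.map g a) = d.map g (d.app c a)

/-- The functor defined by valid code data. -/
@[simps]
def LexCodeData.functor (d : LexCodeData A) (hd : LexCodeValid d) : C ⥤ Type v where
  obj c := { t : LexCode A // t ∈ d.obj c }
  map g := TypeCat.ofHom fun t => ⟨d.map g t.1, hd.mem_map g t.2⟩
  map_id c := by ext t; exact hd.map_id c t.2
  map_comp g g' := by ext t; exact hd.map_comp g g' t.2

/-- The natural transformation from `A` to the functor defined by valid code data. -/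
@[simps]
def LexCodeData.nat (d : LexCodeData A) (hd : LexCodeValid d) : A ⟶ d.functor hd where
  app c := TypeCat.ofHom fun a => ⟨d.app c a, hd.app_mem c a⟩
  naturality c c' g := by ext a; exact Subtype.ext (hd.app_natural g a)

end CodeData

section Factor

variable {A L : C ⥤ Type v} (h : A ⟶ L) [PreservesFiniteLimits L]

/-- Choice of a code for each element of the lex closure. -/
noncomputable def lexE (c : C) (x : (lexClosure h).obj c) : LexCode A :=
  (LexMem.exists_code h x.2).choose

theorem lexE_decodes (c : C) (x : (lexClosure h).obj c) : LexDecode h (lexE h c x) c x.1 :=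
  (LexMem.exists_code h x.2).choose_spec

theorem lexE_injective (c : C) : Function.Injective (lexE h c) := by
  intro x y hxy
  refine Subtype.ext (LexDecode.unique h (lexE_decodes h c x) ?_)
  rw [hxy]
  exact lexE_decodes h c y

/-- Inverse of `lexE` on its range. -/
noncomputable def lexInvE (c : C) (t : LexCode A) (ht : t ∈ Set.range (lexE h c)) :
    (lexClosure h).obj c :=
  ht.choose

theorem lexE_lexInvE (c : C) (t : LexCode A) (ht : t ∈ Set.range (lexE h c)) :
    lexE h c (lexInvE h c t ht) = t :=
  ht.choose_spec

theorem lexInvE_lexE (c : C) (x : (lexClosure h).obj c) :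
    lexInvE h c (lexE h c x) ⟨x, rfl⟩ = x :=
  lexE_injective h c (lexE_lexInvE h c _ _)

/-- The code data associated to `h : A ⟶ L`. -/
noncomputable def lexData : LexCodeData A where
  obj c := Set.range (lexE h c)
  map {c c'} g := Function.extend (lexE h c) (fun x => lexE h c' ((lexClosure h).map g x)) id
  app c a := lexE h c ⟨h.app c a, LexMem.img c a⟩

theorem lexData_map_spec {c c' : C} (g : c ⟶ c') (x : (lexClosure h).obj c) :
    (lexData h).map g (lexE h c x) = lexE h c' ((lexClosure h).map g x) := by
  show Function.extend (lexE h c) (fun x => lexE h c' ((lexClosure h).map g x)) id (lexE h c x) = _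
  exact (lexE_injective h c).extend_apply _ _ _

theorem lexData_valid : LexCodeValid (lexData h) where
  mem_map {c c'} g t ht := by
    obtain ⟨x, rfl⟩ := ht
    rw [lexData_map_spec]
    exact ⟨_, rfl⟩
  map_id c {t} ht := by
    obtain ⟨x, rfl⟩ := ht
    rw [lexData_map_spec, CategoryTheory.Functor.map_id]
    rfl
  map_comp {c c' c''} g g' {t} ht := by
    obtain ⟨x, rfl⟩ := ht
    rw [lexData_map_spec, lexData_map_spec, lexData_map_spec,
      CategoryTheory.Functor.map_comp]
    rfl
  app_mem c a := ⟨_, rfl⟩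
  app_natural {c c'} g a := by
    show lexE h c' ⟨h.app c' (A.map g a), _⟩ =
      (lexData h).map g (lexE h c ⟨h.app c a, LexMem.img c a⟩)
    rw [lexData_map_spec h g ⟨h.app c a, LexMem.img c a⟩]
    congr 1
    exact Subtype.ext (ConcreteCategory.congr_hom (h.naturality g) a)

/-- The functor built from the code data is isomorphic to the lex closure. -/
noncomputable def lexDataIso : (lexData h).functor (lexData_valid h) ≅ lexClosure h :=
  NatIso.ofComponents
    (fun c =>
      { hom := TypeCat.ofHom fun t => lexInvE h c t.1 t.2
        inv := TypeCat.ofHom fun x => ⟨lexE h c x, ⟨x, rfl⟩⟩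
        hom_inv_id := by
          ext t
          exact Subtype.ext (lexE_lexInvE h c t.1 t.2)
        inv_hom_id := by
          ext x
          exact lexInvE_lexE h c x })
    (by
      intro c c' g
      ext t
      obtain ⟨t, ht⟩ := t
      obtain ⟨x, rfl⟩ := ht
      show lexInvE h c' ((lexData h).map g (lexE h c x)) _ = (lexClosure h).map g (lexInvE h c (lexE h c x) _)
      rw [lexInvE_lexE]
      apply lexE_injective h c'
      exact (lexE_lexInvE h c' _ _).trans (lexData_map_spec h g x))

end Factor

section Assemble

variable {A L : C ⥤ Type v} (h : A ⟶ L) [PreservesFiniteLimits L]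

/-- The inclusion of the lex closure into `L`. -/
@[simps]
def lexClosureInclusion : lexClosure h ⟶ L where
  app c := TypeCat.ofHom Subtype.val

theorem lexDataFunctor_preservesFiniteLimits :
    PreservesFiniteLimits ((lexData h).functor (lexData_valid h)) := by
  haveI := lexClosure_preservesFiniteLimits h
  exact preservesFiniteLimits_of_natIso (lexDataIso h).symm

/-- The morphism from the code-data functor to `L`. -/
noncomputable def lexDataToL : (lexData h).functor (lexData_valid h) ⟶ L :=
  (lexDataIso h).hom ≫ lexClosureInclusion h

theorem lexData_triangle : (lexData h).nat (lexData_valid h) ≫ lexDataToL h = h := by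
  ext c a
  show ((lexDataIso h).hom.app c ((lexData h).nat (lexData_valid h) |>.app c a)).1 = h.app c a
  show (lexInvE h c (lexE h c ⟨h.app c a, LexMem.img c a⟩) _).1 = h.app c a
  exact congrArg Subtype.val (lexInvE_lexE h c ⟨h.app c a, LexMem.img c a⟩)

theorem lex_solutionSetCondition :
    SolutionSetCondition.{v}
      (ObjectProperty.ι (fun F : C ⥤ Type v => PreservesFiniteLimits F)) := by
  intro A
  refine ⟨{q : {d : LexCodeData A // LexCodeValid d} //
      PreservesFiniteLimits (q.1.functor q.2)},
    fun i => ⟨i.1.1.functor i.1.2, i.2⟩,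
    fun i => i.1.1.nat i.1.2, ?_⟩
  intro X h
  haveI : PreservesFiniteLimits
      ((ObjectProperty.ι (fun F : C ⥤ Type v => PreservesFiniteLimits F)).obj X) :=
    X.property
  refine ⟨⟨⟨lexData h, lexData_valid h⟩, lexDataFunctor_preservesFiniteLimits h⟩,
    ObjectProperty.homMk (lexDataToL h), lexData_triangle h⟩

end Assemble


end Auxiliary

set_option maxHeartbeats 1000000 in
/-- For a small category `C` with all finite limits, the full subcategory `Lex(C, Type)` of the
functor category `C ⥤ Type` spanned by finite-limit-preserving functors is reflective (its
inclusion has a left adjoint), and it is closed under filtered colimits in `C ⥤ Type`, so that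
the inclusion creates and preserves filtered colimits. -/
theorem lex_reflective_and_closed_under_filtered_colimits
    {C : Type v} [SmallCategory C] [HasFiniteLimits C] :
    (ObjectProperty.ι
        (fun F : C ⥤ Type v => PreservesFiniteLimits F)).IsRightAdjoint ∧
      ∀ (J : Type v) (_ : SmallCategory J), IsFiltered J →
        ClosedUnderColimitsOfShape J (fun F : C ⥤ Type v => PreservesFiniteLimits F) ∧
        Nonempty (CreatesColimitsOfShape J
          (ObjectProperty.ι (fun F : C ⥤ Type v => PreservesFiniteLimits F))) ∧
        PreservesColimitsOfShape J
          (ObjectProperty.ι (fun F : C ⥤ Type v => PreservesFiniteLimits F)) := by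
  constructor
  · haveI : HasLimits (ObjectProperty.FullSubcategory (fun F : C ⥤ Type v => PreservesFiniteLimits F)) := by
      constructor
      intro J instJ
      haveI : ObjectProperty.IsClosedUnderLimitsOfShape
          (fun F : C ⥤ Type v => PreservesFiniteLimits F) J :=
        ⟨fun X ⟨p⟩ => lex_closedUnderLimits p.isLimit p.prop_diag_obj⟩
      infer_instance
    haveI : PreservesLimits
        (ObjectProperty.ι (fun F : C ⥤ Type v => PreservesFiniteLimits F)) := by
      constructor
      intro J instJ
      haveI : ObjectProperty.IsClosedUnderLimitsOfShape
          (fun F : C ⥤ Type v => PreservesFiniteLimits F) J :=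
        ⟨fun X ⟨p⟩ => lex_closedUnderLimits p.isLimit p.prop_diag_obj⟩
      infer_instance
    exact isRightAdjoint_of_preservesLimits_of_solutionSetCondition _ lex_solutionSetCondition
  · intro J instJ hJ
    haveI := hJ
    haveI : ObjectProperty.IsClosedUnderColimitsOfShape
        (fun F : C ⥤ Type v => PreservesFiniteLimits F) J :=
      ⟨fun X ⟨p⟩ => lex_closedUnderFilteredColimits p.isColimit p.prop_diag_obj⟩
    refine ⟨lex_closedUnderFilteredColimits, ⟨inferInstance⟩, ?_⟩
    infer_instance
end

section
/- Let C and C' be small categories each having all finite colimits. If there is an equivalence of categories Ind C ≌ Ind C', then there is an equivalence of categories C ≌ C'. -/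
open CategoryTheory Limits Opposite

universe v

namespace IndEquivAux

variable {D : Type (v + 1)} [Category.{v} D] {E : Type (v + 1)} [Category.{v} E]

/-- An object is compact if the hom functor out of it preserves filtered colimits. -/
def IsCompactObj (X : D) : Prop :=
  ∀ (J : Type v) (_ : SmallCategory J) (_ : IsFiltered J),
    Nonempty (PreservesColimitsOfShape J (coyoneda.obj (op X)))

theorem isCompactObj_of_iso {X Y : D} (i : X ≅ Y) (h : IsCompactObj X) : IsCompactObj Y := by
  intro J _ _
  obtain ⟨inst⟩ := h J ‹_› ‹_›
  exact ⟨preservesColimitsOfShape_of_natIso (coyoneda.mapIso i.symm.op)⟩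

/-- For an adjunction (here: equivalence), the hom functor out of `F.obj X` is naturally
isomorphic to `G ⋙ Hom(X, -)`. -/
noncomputable def equivCoyonedaIso (e : D ≌ E) (X : D) :
    coyoneda.obj (op (e.functor.obj X)) ≅ e.inverse ⋙ coyoneda.obj (op X) :=
  NatIso.ofComponents (fun Y => Equiv.toIso (e.toAdjunction.homEquiv X Y)) (by
    intro Y Z g
    ext f
    exact e.toAdjunction.homEquiv_naturality_right f g)

theorem isCompactObj_equiv_functor_obj (e : D ≌ E) {X : D} (h : IsCompactObj X) :
    IsCompactObj (e.functor.obj X) := by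
  intro J _ _
  obtain ⟨inst⟩ := h J ‹_› ‹_›
  have : PreservesColimitsOfShape J (e.inverse ⋙ coyoneda.obj (op X)) :=
    inferInstance
  exact ⟨preservesColimitsOfShape_of_natIso (equivCoyonedaIso e X).symm⟩

theorem isIdempotentComplete_of_hasCoequalizers (A : Type v) [SmallCategory A]
    [HasCoequalizers A] : IsIdempotentComplete A := by
  refine ⟨fun X p hp => ?_⟩
  have h : (𝟙 X) ≫ p = p ≫ p := by rw [Category.id_comp, hp]
  refine ⟨coequalizer (𝟙 X) p, coequalizer.desc p h, coequalizer.π (𝟙 X) p, ?_, ?_⟩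
  · apply coequalizer.hom_ext
    simp only [coequalizer.π_desc_assoc, Category.comp_id]
    rw [← coequalizer.condition, Category.id_comp]
  · exact coequalizer.π_desc _ _

variable {C : Type v} [SmallCategory C]

/-- The hom functor out of `Ind.yoneda.obj c` is naturally isomorphic to evaluation
of the underlying presheaf at `c`. -/
noncomputable def coyonedaIndYonedaIso (c : C) :
    coyoneda.obj (op (Ind.yoneda.obj c)) ≅
      Ind.inclusion C ⋙ (evaluation Cᵒᵖ (Type v)).obj (op c) := by
  refine NatIso.ofComponents
    (fun X => Equiv.toIso
      ((Ind.inclusion.fullyFaithful.homEquiv).trans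
        (((Ind.yonedaCompInclusion.app c).homCongr (Iso.refl _)).trans
          yonedaEquiv))) ?_
  intro X Y g
  ext h
  simp only [Equiv.toIso_hom, types_comp_apply, Equiv.trans_apply, Iso.homCongr_apply,
    Iso.refl_hom, Iso.symm_hom, Category.comp_id, Functor.comp_obj, Functor.comp_map,
    evaluation_obj_obj, evaluation_obj_map,
    Functor.FullyFaithful.homEquiv_apply, Functor.map_comp]
  simp [Equiv.toIso, yonedaEquiv_apply]

theorem isCompactObj_ind_yoneda (c : C) : IsCompactObj (Ind.yoneda.obj c) := by
  intro J _ _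
  have : PreservesColimitsOfShape J (Ind.inclusion C) :=
    ⟨fun {K} => preservesColimit_of_createsColimit_and_hasColimit K _⟩
  have : PreservesColimitsOfShape J
      (Ind.inclusion C ⋙ (evaluation Cᵒᵖ (Type v)).obj (op c)) := inferInstance
  exact ⟨preservesColimitsOfShape_of_natIso (coyonedaIndYonedaIso c).symm⟩

theorem exists_ind_yoneda_iso [HasFiniteColimits C] (X : Ind C) (hX : IsCompactObj X) :
    ∃ c : C, Nonempty (X ≅ Ind.yoneda.obj c) := by
  have hidem : IsIdempotentComplete C := isIdempotentComplete_of_hasCoequalizers C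
  let P := X.presentation
  have : IsFiltered P.I := P.hI
  let F : P.I ⥤ Ind C := P.F ⋙ Ind.yoneda
  obtain ⟨inst⟩ := hX P.I inferInstance inferInstance
  have hc : IsColimit ((coyoneda.obj (op X)).mapCocone (colimit.cocone F)) :=
    isColimitOfPreserves _ (colimit.isColimit F)
  obtain ⟨j, f, hf⟩ := Types.jointly_surjective _ hc X.colimitPresentationCompYoneda.inv
  have hf' : f ≫ colimit.ι F j = X.colimitPresentationCompYoneda.inv := hf
  set r : F.obj j ⟶ X := colimit.ι F j ≫ X.colimitPresentationCompYoneda.hom with hr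
  have hfr : f ≫ r = 𝟙 X := by
    rw [hr, ← Category.assoc, hf', Iso.inv_hom_id]
  -- the idempotent on `F.obj j = Ind.yoneda.obj (P.F.obj j)`
  let e₀ : P.F.obj j ⟶ P.F.obj j := Ind.yoneda.preimage (r ≫ f)
  have he₀ : Ind.yoneda.map e₀ = r ≫ f := Ind.yoneda.map_preimage _
  have hee : e₀ ≫ e₀ = e₀ := by
    apply Ind.yoneda.map_injective
    rw [Functor.map_comp, he₀, Category.assoc, ← Category.assoc f, hfr, Category.id_comp]
  obtain ⟨Y, i, p, hip, hpi⟩ := hidem.idempotents_split (P.F.obj j) e₀ hee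
  refine ⟨Y, ⟨⟨f ≫ Ind.yoneda.map p, Ind.yoneda.map i ≫ r, ?_, ?_⟩⟩⟩
  · rw [Category.assoc, ← Category.assoc (Ind.yoneda.map p), ← Functor.map_comp, hpi, he₀,
      Category.assoc r f r, hfr, Category.comp_id, hfr]
  · have key : i ≫ e₀ ≫ p = 𝟙 Y := by
      rw [← hpi]
      simp only [Category.assoc]
      rw [← Category.assoc i p, hip, Category.id_comp]
    calc (Ind.yoneda.map i ≫ r) ≫ f ≫ Ind.yoneda.map p
        = Ind.yoneda.map i ≫ (r ≫ f) ≫ Ind.yoneda.map p := by simp only [Category.assoc]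
      _ = Ind.yoneda.map (i ≫ e₀ ≫ p) := by
            rw [Functor.map_comp, Functor.map_comp, he₀]
      _ = 𝟙 _ := by rw [key, CategoryTheory.Functor.map_id]

end IndEquivAux

open IndEquivAux

/-- If `C` and `C'` are small categories with all finite colimits and `Ind C ≌ Ind C'`, then
`C ≌ C'`. -/
theorem equiv_of_ind_equiv {C : Type v} [SmallCategory C] {C' : Type v} [SmallCategory C']
    [HasFiniteColimits C] [HasFiniteColimits C'] (e : Ind C ≌ Ind C') :
    Nonempty (C ≌ C') := by
  -- The full subcategories of compact objects
  let K := ObjectProperty.FullSubcategory (IsCompactObj (D := Ind C))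
  let K' := ObjectProperty.FullSubcategory (IsCompactObj (D := Ind C'))
  -- `C ≌ K`
  let L : C ⥤ K := ObjectProperty.lift _ Ind.yoneda (fun c => isCompactObj_ind_yoneda c)
  have hL : L ⋙ ObjectProperty.ι _ = Ind.yoneda := rfl
  have : (L ⋙ ObjectProperty.ι _).Faithful := by rw [hL]; infer_instance
  have : (L ⋙ ObjectProperty.ι _).Full := by rw [hL]; infer_instance
  have : L.Faithful := Functor.Faithful.of_comp L (ObjectProperty.ι _)
  have : L.Full := Functor.Full.of_comp_faithful L (ObjectProperty.ι _)
  have : L.EssSurj := by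
    refine ⟨fun X => ?_⟩
    obtain ⟨c, ⟨i⟩⟩ := exists_ind_yoneda_iso X.obj X.property
    exact ⟨c, ⟨(ObjectProperty.ι _).preimageIso i.symm⟩⟩
  have : L.IsEquivalence := { }
  -- `C' ≌ K'`
  let L' : C' ⥤ K' := ObjectProperty.lift _ Ind.yoneda (fun c => isCompactObj_ind_yoneda c)
  have hL' : L' ⋙ ObjectProperty.ι _ = Ind.yoneda := rfl
  have : (L' ⋙ ObjectProperty.ι _).Faithful := by rw [hL']; infer_instance
  have : (L' ⋙ ObjectProperty.ι _).Full := by rw [hL']; infer_instance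
  have : L'.Faithful := Functor.Faithful.of_comp L' (ObjectProperty.ι _)
  have : L'.Full := Functor.Full.of_comp_faithful L' (ObjectProperty.ι _)
  have : L'.EssSurj := by
    refine ⟨fun X => ?_⟩
    obtain ⟨c, ⟨i⟩⟩ := exists_ind_yoneda_iso X.obj X.property
    exact ⟨c, ⟨(ObjectProperty.ι _).preimageIso i.symm⟩⟩
  have : L'.IsEquivalence := { }
  -- `K ≌ K'` induced by `e`
  let M : K ⥤ K' := ObjectProperty.lift _ (ObjectProperty.ι _ ⋙ e.functor)
    (fun X => isCompactObj_equiv_functor_obj e X.property)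
  have hM : M ⋙ ObjectProperty.ι _ = ObjectProperty.ι _ ⋙ e.functor := rfl
  have : (M ⋙ ObjectProperty.ι _).Faithful := by rw [hM]; infer_instance
  have : (M ⋙ ObjectProperty.ι _).Full := by rw [hM]; infer_instance
  have : M.Faithful := Functor.Faithful.of_comp M (ObjectProperty.ι _)
  have : M.Full := Functor.Full.of_comp_faithful M (ObjectProperty.ι _)
  have : M.EssSurj := by
    refine ⟨fun X => ?_⟩
    have hc : IsCompactObj (e.inverse.obj X.obj) := by
      refine isCompactObj_of_iso ?_ (isCompactObj_equiv_functor_obj e.symm X.property)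
      exact Iso.refl _
    refine ⟨⟨e.inverse.obj X.obj, hc⟩, ⟨(ObjectProperty.ι _).preimageIso ?_⟩⟩
    exact e.counitIso.app X.obj
  have : M.IsEquivalence := { }
  exact ⟨L.asEquivalence.trans ((M.asEquivalence).trans L'.asEquivalence.symm)⟩
end

section
/- Universal property of the Ind-completion: let C be a small category and D a category with all filtered colimits. Then the functor given by precomposition with Ind.yoneda : C ⥤ Ind C, from the full subcategory of the functor category (Ind C ⥤ D) spanned by the filtered-colimit-preserving functors, to the functor category C ⥤ D, is an equivalence of categories. -/
open CategoryTheory Limits Opposite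

universe v u

namespace IndUP

variable {C : Type v} [SmallCategory C] {D : Type u} [Category.{v} D]

/-- The co-Yoneda functor of `Ind.yoneda.obj c` is isomorphic to evaluation of the inclusion
into presheaves at `c`. -/
noncomputable def coyonedaIndIso (c : C) :
    coyoneda.obj (op (Ind.yoneda.obj c)) ≅
      Ind.inclusion C ⋙ (evaluation Cᵒᵖ (Type v)).obj (op c) :=
  NatIso.ofComponents
    (fun Y => Equiv.toIso
      (Ind.inclusion.fullyFaithful.homEquiv.trans
        ((Iso.homCongr (Ind.yonedaCompInclusion.app c) (Iso.refl _)).trans yonedaEquiv)))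
    (fun {Y Z} h => by
      ext f
      dsimp [Functor.FullyFaithful.homEquiv]
      simp [Equiv.toIso, yonedaEquiv_comp])

noncomputable instance coyonedaIndPreserves (c : C) {J : Type v} [SmallCategory J]
    [IsFiltered J] :
    PreservesColimitsOfShape J (coyoneda.obj (op (Ind.yoneda.obj c))) :=
  preservesColimitsOfShape_of_natIso (coyonedaIndIso c).symm

/-- Every map from `Ind.yoneda.obj c` into a small filtered colimit in `Ind C` factors through
one of the legs. -/
theorem exists_fac {J : Type v} [SmallCategory J] [IsFiltered J] {H : J ⥤ Ind C}
    {t : Cocone H} (ht : IsColimit t) {c : C} (f : Ind.yoneda.obj c ⟶ t.pt) :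
    ∃ (j : J) (g : Ind.yoneda.obj c ⟶ H.obj j), g ≫ t.ι.app j = f := by
  obtain ⟨j, g, hg⟩ := Types.jointly_surjective _
    (isColimitOfPreserves (coyoneda.obj (op (Ind.yoneda.obj c))) ht) f
  exact ⟨j, g, hg⟩

/-- Two maps from `Ind.yoneda.obj c` into a stage of a small filtered colimit in `Ind C` which
agree in the colimit are coequalized at a later stage. -/
theorem exists_coeq {J : Type v} [SmallCategory J] [IsFiltered J] {H : J ⥤ Ind C}
    {t : Cocone H} (ht : IsColimit t) {c : C} {j : J}
    (g g' : Ind.yoneda.obj c ⟶ H.obj j) (h : g ≫ t.ι.app j = g' ≫ t.ι.app j) :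
    ∃ (k : J) (u : j ⟶ k), g ≫ H.map u = g' ≫ H.map u := by
  have h' : ((coyoneda.obj (op (Ind.yoneda.obj c))).mapCocone t).ι.app j g
      = ((coyoneda.obj (op (Ind.yoneda.obj c))).mapCocone t).ι.app j g' := h
  rw [Types.FilteredColimit.isColimit_eq_iff _
    (isColimitOfPreserves (coyoneda.obj (op (Ind.yoneda.obj c))) ht)] at h'
  obtain ⟨k, u, v, huv⟩ := h'
  refine ⟨_, u ≫ IsFiltered.coeqHom u v, ?_⟩
  have hc := IsFiltered.coeq_condition u v
  have huv' : g ≫ H.map u = g' ≫ H.map v := huv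
  calc g ≫ H.map (u ≫ IsFiltered.coeqHom u v)
      = (g ≫ H.map u) ≫ H.map (IsFiltered.coeqHom u v) := by
        rw [Functor.map_comp, Category.assoc]
    _ = (g' ≫ H.map v) ≫ H.map (IsFiltered.coeqHom u v) := by rw [huv']
    _ = g' ≫ H.map (v ≫ IsFiltered.coeqHom u v) := by
        rw [Functor.map_comp, Category.assoc]
    _ = g' ≫ H.map (u ≫ IsFiltered.coeqHom u v) := by rw [← hc]

/-- The canonical presentation of an ind-object as a small filtered colimit of objects in the
image of `Ind.yoneda`. -/
noncomputable def presCocone (X : Ind C) : Cocone (X.presentation.F ⋙ Ind.yoneda) where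
  pt := X
  ι :=
    { app := fun i => colimit.ι (X.presentation.F ⋙ Ind.yoneda) i ≫
        (Ind.colimitPresentationCompYoneda X).hom
      naturality := fun i i' u => by
        simpa using colimit.w_assoc (X.presentation.F ⋙ Ind.yoneda) u
          (Ind.colimitPresentationCompYoneda X).hom }

noncomputable def presCoconeIsColimit (X : Ind C) : IsColimit (presCocone X) :=
  IsColimit.ofIsoColimit (colimit.isColimit _)
    (Cocones.ext (Ind.colimitPresentationCompYoneda X) (fun i => rfl))

section Extend

variable {F G : Ind C ⥤ D} [PreservesFilteredColimits F]

/-- The components of the extension of a natural transformation along `Ind.yoneda`. -/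
noncomputable def extApp (α : Ind.yoneda ⋙ F ⟶ Ind.yoneda ⋙ G) (X : Ind C) :
    F.obj X ⟶ G.obj X :=
  (isColimitOfPreserves F (presCoconeIsColimit X)).desc
    (Cocone.mk (G.obj X)
      { app := fun i => α.app (X.presentation.F.obj i) ≫ G.map ((presCocone X).ι.app i)
        naturality := fun i i' u => by
          have h1 := α.naturality (X.presentation.F.map u)
          have h2 := (presCocone X).w u
          dsimp at h1 h2 ⊢
          erw [Category.comp_id, ← Category.assoc, h1, Category.assoc, ← Functor.map_comp G,
            h2] })

lemma map_ι_extApp (α : Ind.yoneda ⋙ F ⟶ Ind.yoneda ⋙ G) (X : Ind C)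
    (i : X.presentation.I) :
    F.map ((presCocone X).ι.app i) ≫ extApp α X
      = α.app (X.presentation.F.obj i) ≫ G.map ((presCocone X).ι.app i) :=
  (isColimitOfPreserves F (presCoconeIsColimit X)).fac _ i

lemma extApp_comm (α : Ind.yoneda ⋙ F ⟶ Ind.yoneda ⋙ G) {c : C} {X : Ind C}
    (f : Ind.yoneda.obj c ⟶ X) :
    F.map f ≫ extApp α X = α.app c ≫ G.map f := by
  obtain ⟨j, g, rfl⟩ := exists_fac (presCoconeIsColimit X) f
  obtain ⟨g₀, rfl⟩ := Ind.yoneda.map_surjective g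
  have h1 := α.naturality g₀
  dsimp at h1
  erw [Functor.map_comp, Category.assoc, map_ι_extApp, ← Category.assoc, h1,
    Category.assoc, Functor.map_comp]
  simp [presCocone]

/-- Extension of natural transformations along `Ind.yoneda`. -/
noncomputable def extendNatTrans (α : Ind.yoneda ⋙ F ⟶ Ind.yoneda ⋙ G) : F ⟶ G where
  app := extApp α
  naturality X Y h := by
    refine (isColimitOfPreserves F (presCoconeIsColimit X)).hom_ext fun i => ?_
    simp only [Functor.mapCocone_ι_app]
    calc F.map ((presCocone X).ι.app i) ≫ F.map h ≫ extApp α Y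
        = F.map ((presCocone X).ι.app i ≫ h) ≫ extApp α Y := by
          erw [Functor.map_comp, Category.assoc]
          simp [presCocone]
      _ = α.app _ ≫ G.map ((presCocone X).ι.app i ≫ h) := extApp_comm α _
      _ = (α.app _ ≫ G.map ((presCocone X).ι.app i)) ≫ G.map h := by
          erw [Functor.map_comp, Category.assoc]
      _ = (F.map ((presCocone X).ι.app i) ≫ extApp α X) ≫ G.map h := by
          erw [extApp_comm (X := X) α ((presCocone X).ι.app i)]
          rfl
      _ = F.map ((presCocone X).ι.app i) ≫ extApp α X ≫ G.map h := by
          erw [Category.assoc]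

@[simp]
lemma whiskerLeft_extendNatTrans (α : Ind.yoneda ⋙ F ⟶ Ind.yoneda ⋙ G) :
    Functor.whiskerLeft Ind.yoneda (extendNatTrans α) = α := by
  ext c
  have := extApp_comm α (𝟙 (Ind.yoneda.obj c))
  simpa [extendNatTrans] using this

lemma extendNatTrans_uniq (β γ : F ⟶ G)
    (h : Functor.whiskerLeft Ind.yoneda β = Functor.whiskerLeft Ind.yoneda γ) : β = γ := by
  ext X
  refine (isColimitOfPreserves F (presCoconeIsColimit X)).hom_ext fun i => ?_
  have hβ := β.naturality (Y := X) ((presCocone X).ι.app i)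
  have hγ := γ.naturality (Y := X) ((presCocone X).ι.app i)
  have happ : β.app (Ind.yoneda.obj (X.presentation.F.obj i))
      = γ.app (Ind.yoneda.obj (X.presentation.F.obj i)) :=
    congrArg (fun δ => δ.app (X.presentation.F.obj i)) h
  dsimp at hβ hγ ⊢
  simp only [happ] at hβ
  exact hβ.trans hγ.symm

end Extend

section EssSurj

variable [HasFilteredColimits D]

variable {J : Type v} [SmallCategory J] [IsFiltered J] {H : J ⥤ Ind C}

/-- The stage through which a map into a filtered colimit factors. -/
noncomputable def stage {t : Cocone H} (ht : IsColimit t) {c : C}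
    (f : Ind.yoneda.obj c ⟶ t.pt) : J :=
  (exists_fac ht f).choose

/-- A factorization of a map into a filtered colimit through a stage. -/
noncomputable def stageMap {t : Cocone H} (ht : IsColimit t) {c : C}
    (f : Ind.yoneda.obj c ⟶ t.pt) : Ind.yoneda.obj c ⟶ H.obj (stage ht f) :=
  (exists_fac ht f).choose_spec.choose

lemma stage_fac {t : Cocone H} (ht : IsColimit t) {c : C}
    (f : Ind.yoneda.obj c ⟶ t.pt) : stageMap ht f ≫ t.ι.app (stage ht f) = f :=
  (exists_fac ht f).choose_spec.choose_spec

variable (F₀ : C ⥤ D)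

/-- Transporting a colimit leg of the pointwise Kan extension along a morphism in the base. -/
lemma leg_stable (s : Cocone (H ⋙ Ind.yoneda.pointwiseLeftKanExtension F₀))
    {c : C} {j k : J} (w : j ⟶ k) (g : Ind.yoneda.obj c ⟶ H.obj j) :
    colimit.ι (CostructuredArrow.proj Ind.yoneda (H.obj j) ⋙ F₀) (CostructuredArrow.mk g) ≫
        s.ι.app j
      = colimit.ι (CostructuredArrow.proj Ind.yoneda (H.obj k) ⋙ F₀)
          (CostructuredArrow.mk (g ≫ H.map w)) ≫ s.ι.app k := by
  erw [← s.w w, ← Category.assoc]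
  congr 1
  simp
  erw [colimit.ι_desc]; rfl

lemma desc_aux {t : Cocone H} (ht : IsColimit t)
    (s : Cocone (H ⋙ Ind.yoneda.pointwiseLeftKanExtension F₀))
    {c : C} {j j' : J} (g : Ind.yoneda.obj c ⟶ H.obj j) (g' : Ind.yoneda.obj c ⟶ H.obj j')
    (h : g ≫ t.ι.app j = g' ≫ t.ι.app j') :
    colimit.ι (CostructuredArrow.proj Ind.yoneda (H.obj j) ⋙ F₀) (CostructuredArrow.mk g) ≫
        s.ι.app j
      = colimit.ι (CostructuredArrow.proj Ind.yoneda (H.obj j') ⋙ F₀)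
          (CostructuredArrow.mk g') ≫ s.ι.app j' := by
  have h2 : (g ≫ H.map (IsFiltered.leftToMax j j')) ≫ t.ι.app (IsFiltered.max j j')
      = (g' ≫ H.map (IsFiltered.rightToMax j j')) ≫ t.ι.app (IsFiltered.max j j') := by
    rw [Category.assoc, Category.assoc, t.w, t.w, h]
  obtain ⟨k₂, v, hv⟩ := exists_coeq ht _ _ h2
  rw [leg_stable F₀ s (IsFiltered.leftToMax j j' ≫ v) g,
    leg_stable F₀ s (IsFiltered.rightToMax j j' ≫ v) g']
  have : g ≫ H.map (IsFiltered.leftToMax j j' ≫ v)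
      = g' ≫ H.map (IsFiltered.rightToMax j j' ≫ v) := by
    rw [Functor.map_comp, Functor.map_comp, ← Category.assoc, ← Category.assoc]
    rw [Category.assoc g, Category.assoc g'] at hv
    rw [Category.assoc, Category.assoc]
    exact hv
  rw [this]

/-- The cocone used to construct the descent morphism. -/
noncomputable def descCocone {t : Cocone H} (ht : IsColimit t)
    (s : Cocone (H ⋙ Ind.yoneda.pointwiseLeftKanExtension F₀)) :
    Cocone (CostructuredArrow.proj Ind.yoneda t.pt ⋙ F₀) where
  pt := s.pt
  ι :=
    { app := fun p =>
        colimit.ι (CostructuredArrow.proj Ind.yoneda (H.obj (stage ht p.hom)) ⋙ F₀)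
          (CostructuredArrow.mk (stageMap ht p.hom)) ≫ s.ι.app (stage ht p.hom)
      naturality := fun p q φ => by
        have step1 := colimit.w
          (CostructuredArrow.proj Ind.yoneda (H.obj (stage ht q.hom)) ⋙ F₀)
          (CostructuredArrow.homMk φ.left rfl :
            CostructuredArrow.mk (Ind.yoneda.map φ.left ≫ stageMap ht q.hom) ⟶
              CostructuredArrow.mk (stageMap ht q.hom))
        have step2 : colimit.ι
              (CostructuredArrow.proj Ind.yoneda (H.obj (stage ht q.hom)) ⋙ F₀)
              (CostructuredArrow.mk (Ind.yoneda.map φ.left ≫ stageMap ht q.hom)) ≫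
                s.ι.app (stage ht q.hom)
            = colimit.ι (CostructuredArrow.proj Ind.yoneda (H.obj (stage ht p.hom)) ⋙ F₀)
                (CostructuredArrow.mk (stageMap ht p.hom)) ≫ s.ι.app (stage ht p.hom) := by
          refine desc_aux F₀ ht s _ _ ?_
          rw [Category.assoc, stage_fac, stage_fac, CostructuredArrow.w φ]
        dsimp at step1 ⊢
        erw [Category.comp_id, ← Category.assoc, step1, step2]; rfl }

/-- The pointwise left Kan extension along `Ind.yoneda` preserves small filtered colimits. -/
noncomputable def isColimitExtMapCocone {t : Cocone H} (ht : IsColimit t) :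
    IsColimit ((Ind.yoneda.pointwiseLeftKanExtension F₀).mapCocone t) where
  desc s := colimit.desc (CostructuredArrow.proj Ind.yoneda t.pt ⋙ F₀) (descCocone F₀ ht s)
  fac s j := by
    refine colimit.hom_ext fun p => ?_
    rw [CostructuredArrow.eq_mk p]
    have step1 : colimit.ι (CostructuredArrow.proj Ind.yoneda (H.obj j) ⋙ F₀)
          (CostructuredArrow.mk p.hom) ≫
            (Ind.yoneda.pointwiseLeftKanExtension F₀).map (t.ι.app j)
        = colimit.ι (CostructuredArrow.proj Ind.yoneda t.pt ⋙ F₀)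
            (CostructuredArrow.mk (p.hom ≫ t.ι.app j)) := by
      simp
      erw [colimit.ι_desc]; rfl
    erw [Functor.mapCocone_ι_app, ← Category.assoc, step1, colimit.ι_desc]
    dsimp [descCocone]
    exact desc_aux F₀ ht s _ _ (by rw [stage_fac])
  uniq s m hm := by
    show m = colimit.desc (CostructuredArrow.proj Ind.yoneda t.pt ⋙ F₀) (descCocone F₀ ht s)
    refine colimit.hom_ext (F := CostructuredArrow.proj Ind.yoneda t.pt ⋙ F₀) fun p => ?_
    erw [CostructuredArrow.eq_mk p, colimit.ι_desc]
    dsimp [descCocone]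
    have step1 : colimit.ι
          (CostructuredArrow.proj Ind.yoneda (H.obj (stage ht p.hom)) ⋙ F₀)
          (CostructuredArrow.mk (stageMap ht p.hom)) ≫
            (Ind.yoneda.pointwiseLeftKanExtension F₀).map (t.ι.app (stage ht p.hom))
        = colimit.ι (CostructuredArrow.proj Ind.yoneda t.pt ⋙ F₀)
            (CostructuredArrow.mk (stageMap ht p.hom ≫ t.ι.app (stage ht p.hom))) := by
      simp
      erw [colimit.ι_desc]; rfl
    erw [← hm (stage ht p.hom), Functor.mapCocone_ι_app, ← Category.assoc, step1, stage_fac]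
    rfl

noncomputable instance extPreservesFiltered :
    PreservesFilteredColimits (Ind.yoneda.pointwiseLeftKanExtension F₀) where
  preserves_filtered_colimits J _ _ :=
    { preservesColimit := fun {H} =>
        preservesColimit_of_preserves_colimit_cocone (colimit.isColimit H)
          (isColimitExtMapCocone F₀ (colimit.isColimit H)) }

/-- The restriction of the pointwise left Kan extension along `Ind.yoneda` is isomorphic to the
original functor. -/
noncomputable def extUnitIso :
    Ind.yoneda ⋙ Ind.yoneda.pointwiseLeftKanExtension F₀ ≅ F₀ :=
  haveI : IsIso (Ind.yoneda.pointwiseLeftKanExtensionUnit F₀) :=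
    (Ind.yoneda.pointwiseLeftKanExtensionIsPointwiseLeftKanExtension F₀).isIso_hom
  (asIso (Ind.yoneda.pointwiseLeftKanExtensionUnit F₀)).symm

end EssSurj

end IndUP

/-- Universal property of the Ind-completion: for a small category `C` and a category `D` with
all filtered colimits, precomposition with `Ind.yoneda : C ⥤ Ind C` is an equivalence from the
full subcategory of `Ind C ⥤ D` spanned by filtered-colimit-preserving functors to `C ⥤ D`. -/
theorem ind_universal_property
    {C : Type v} [SmallCategory C] {D : Type u} [Category.{v} D] [HasFilteredColimits D] :
    (ObjectProperty.ι (P := fun F : Ind C ⥤ D => PreservesFilteredColimits F) ⋙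
      (Functor.whiskeringLeft C (Ind C) D).obj Ind.yoneda).IsEquivalence := by
  haveI faithful : (ObjectProperty.ι (P := fun F : Ind C ⥤ D => PreservesFilteredColimits F) ⋙
      (Functor.whiskeringLeft C (Ind C) D).obj Ind.yoneda).Faithful :=
    { map_injective := fun {F G} {β γ} h => by
        haveI : PreservesFilteredColimits F.obj := F.property
        ext1; exact IndUP.extendNatTrans_uniq β.hom γ.hom h }
  haveI full : (ObjectProperty.ι (P := fun F : Ind C ⥤ D => PreservesFilteredColimits F) ⋙
      (Functor.whiskeringLeft C (Ind C) D).obj Ind.yoneda).Full :=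
    { map_surjective := fun {F G} α => by
        haveI : PreservesFilteredColimits F.obj := F.property
        haveI : PreservesFilteredColimits
          ((ObjectProperty.ι (P :=
            (fun F : Ind C ⥤ D => PreservesFilteredColimits F))).obj F) := F.property
        exact ⟨ObjectProperty.homMk (IndUP.extendNatTrans α), IndUP.whiskerLeft_extendNatTrans α⟩ }
  haveI essSurj : (ObjectProperty.ι (P := fun F : Ind C ⥤ D => PreservesFilteredColimits F) ⋙
      (Functor.whiskeringLeft C (Ind C) D).obj Ind.yoneda).EssSurj :=
    { mem_essImage := fun F₀ =>
        ⟨⟨Ind.yoneda.pointwiseLeftKanExtension F₀, IndUP.extPreservesFiltered F₀⟩,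
          ⟨IndUP.extUnitIso F₀⟩⟩ }
  exact { faithful := faithful, full := full, essSurj := essSurj }
end

section
/- Let C and C' be small categories with all finite colimits, and let f : C ⥤ C' be a functor preserving finite colimits. Let F : Ind C ⥤ Ind C' be a filtered-colimit-preserving functor equipped with a natural isomorphism F ∘ Ind.yoneda ≅ Ind.yoneda ∘ f (such an F exists and is unique up to natural isomorphism). Then F admits a right adjoint. -/
open CategoryTheory Limits

universe v

namespace IndExtAux

variable {C : Type v} [SmallCategory C]

/-- The tautological cocone over the costructured arrow category of `Ind.yoneda`. -/
@[simps]
noncomputable def tautCocone (X : Ind C) :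
    Cocone (CostructuredArrow.proj Ind.yoneda X ⋙ Ind.yoneda) where
  pt := X
  ι :=
    { app := fun g => g.hom
      naturality := fun g₁ g₂ φ => by exact (CostructuredArrow.w φ).trans (Category.comp_id _).symm }

/-- Equivalence with the costructured arrow category over the underlying presheaf. -/
noncomputable def costructuredArrowEquiv (X : Ind C) :
    CostructuredArrow Ind.yoneda X ≌ CostructuredArrow yoneda ((Ind.inclusion C).obj X) :=
  (CostructuredArrow.post Ind.yoneda (Ind.inclusion C) X).asEquivalence.trans
    (CostructuredArrow.mapNatIso Ind.yonedaCompInclusion)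

noncomputable def isColimitTautCocone (X : Ind C) : IsColimit (tautCocone X) := by
  haveI := fullyFaithful_reflectsColimits (Ind.inclusion C)
  apply isColimitOfReflects (Ind.inclusion C)
  let t := (costructuredArrowEquiv X).functor
  have hw : IsColimit ((Presheaf.tautologicalCocone ((Ind.inclusion C).obj X)).whisker t) :=
    (Functor.Final.isColimitWhiskerEquiv t _).symm
      (Presheaf.isColimitTautologicalCocone _)
  let φ : t ⋙ CostructuredArrow.proj yoneda ((Ind.inclusion C).obj X) ⋙ yoneda ≅
      (CostructuredArrow.proj Ind.yoneda X ⋙ Ind.yoneda) ⋙ Ind.inclusion C :=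
    NatIso.ofComponents (fun g => Ind.yonedaCompInclusion.symm.app g.left)
      (fun {g₁ g₂} φ' => Ind.yonedaCompInclusion.inv.naturality φ'.left)
  refine (IsColimit.precomposeHomEquiv φ _) (hw.ofIsoColimit (Cocones.ext (Iso.refl _)
    (fun g => ?_)))
  dsimp [t, φ, costructuredArrowEquiv]
  simp
  rfl

end IndExtAux

namespace IndExtAux2

open IndExtAux

variable {C : Type v} [SmallCategory C]
variable {E : Type*} [Category.{v} E]

noncomputable def isPointwiseLKE (M : Ind C ⥤ E) [PreservesFilteredColimits M] :
    (Functor.LeftExtension.mk M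
      (𝟙 (Ind.yoneda ⋙ M))).IsPointwiseLeftKanExtension := fun X => by
  refine IsColimit.ofIsoColimit (isColimitOfPreserves M (isColimitTautCocone X))
    (Cocones.ext (Iso.refl _) (fun g => ?_))
  dsimp
  simp
  exact (Category.comp_id _).trans (Category.id_comp _).symm

lemma isLKE (M : Ind C ⥤ E) [PreservesFilteredColimits M] :
    M.IsLeftKanExtension (𝟙 (Ind.yoneda ⋙ M)) :=
  (isPointwiseLKE M).isLeftKanExtension

noncomputable def extensionIso (M N : Ind C ⥤ E)
    [PreservesFilteredColimits M] [PreservesFilteredColimits N]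
    (i : Ind.yoneda ⋙ M ≅ Ind.yoneda ⋙ N) : M ≅ N :=
  have := isLKE M
  have := isLKE N
  Functor.leftKanExtensionUniqueOfIso M (𝟙 _) i N (𝟙 _)

end IndExtAux2

section Main

variable {C : Type v} [SmallCategory C]
    {C' : Type v} [SmallCategory C'] [HasFiniteColimits C] [HasFiniteColimits C']
    (f : C ⥤ C') [PreservesFiniteColimits f]

theorem main_thm
    (F : Ind C ⥤ Ind C') [PreservesFilteredColimits F]
    (e : Ind.yoneda ⋙ F ≅ f ⋙ Ind.yoneda) :
    F.IsLeftAdjoint := by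
  letI L' : (Cᵒᵖ ⥤ Type v) ⥤ (C'ᵒᵖ ⥤ Type v) := f.op.lan
  letI R' : (C'ᵒᵖ ⥤ Type v) ⥤ (Cᵒᵖ ⥤ Type v) := (Functor.whiskeringLeft _ _ (Type v)).obj f.op
  let adj : L' ⊣ R' := f.op.lanAdjunction (Type v)
  -- the restriction functor sends ind-objects to ind-objects
  have hG : ∀ Y : Ind C', IsIndObject ((Ind.inclusion C' ⋙ R').obj Y) := by
    intro Y
    show IsIndObject (f.op ⋙ (Ind.inclusion C').obj Y)
    haveI h1 : PreservesFiniteLimits ((Ind.inclusion C').obj Y) :=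
      haveI : IsFiltered (CostructuredArrow yoneda ((Ind.inclusion C').obj Y)) :=
        Y.isIndObject_inclusion_obj.isFiltered
      preservesFiniteLimits_of_isFiltered_costructuredArrow_yoneda _
    haveI h2 : PreservesFiniteLimits f.op := preservesFiniteLimits_op f
    haveI h3 : PreservesFiniteLimits (f.op ⋙ (Ind.inclusion C').obj Y) :=
      comp_preservesFiniteLimits _ _
    haveI : IsFiltered (CostructuredArrow yoneda (f.op ⋙ (Ind.inclusion C').obj Y)) :=
      isFiltered_costructuredArrow_yoneda_of_preservesFiniteLimits _
    haveI : FinallySmall.{v} (CostructuredArrow yoneda (f.op ⋙ (Ind.inclusion C').obj Y)) :=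
      FinallySmall.mk' (𝟭 _)
    exact isIndObject_of_isFiltered_of_finallySmall _
  let G : Ind C' ⥤ Ind C :=
    ObjectProperty.lift _ (Ind.inclusion C' ⋙ R') hG ⋙ (Ind.equivalence C).inverse
  -- comm2
  let comm2 : Ind.inclusion C' ⋙ R' ≅ G ⋙ Ind.inclusion C :=
    (ObjectProperty.liftCompιIso _ _ _).symm ≪≫
      (Functor.isoWhiskerLeft (ObjectProperty.lift _ (Ind.inclusion C' ⋙ R') hG)
        (Functor.isoWhiskerRight (Ind.equivalence C).counitIso
          (ObjectProperty.ι _))).symm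
  -- instances for extensionIso
  haveI : PreservesColimitsOfSize.{v, v} L' := adj.leftAdjoint_preservesColimits
  haveI : PreservesFilteredColimits (Ind.inclusion C ⋙ L') :=
    ⟨fun J _ _ => inferInstance⟩
  haveI : PreservesFilteredColimits (F ⋙ Ind.inclusion C') :=
    ⟨fun J _ _ => inferInstance⟩
  -- comm1
  let comm1 : Ind.inclusion C ⋙ L' ≅ F ⋙ Ind.inclusion C' :=
    IndExtAux2.extensionIso _ _
      (Functor.isoWhiskerRight Ind.yonedaCompInclusion L' ≪≫
        (Functor.isoWhiskerRight uliftYonedaIsoYoneda.{v}.symm L' ≪≫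
          (Presheaf.compULiftYonedaIsoULiftYonedaCompLan.{0} f).symm ≪≫
          Functor.isoWhiskerLeft f uliftYonedaIsoYoneda.{v}) ≪≫
        Functor.isoWhiskerLeft f Ind.yonedaCompInclusion.symm ≪≫
        Functor.isoWhiskerRight e.symm (Ind.inclusion C'))
  exact ⟨G, ⟨adj.restrictFullyFaithful Ind.inclusion.fullyFaithful
    Ind.inclusion.fullyFaithful comm1 comm2⟩⟩

end Main


/-- Let `C` and `C'` be small categories with all finite colimits and `f : C ⥤ C'` a functor
preserving finite colimits. Any filtered-colimit-preserving functor `F : Ind C ⥤ Ind C'`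
equipped with a natural isomorphism `Ind.yoneda ⋙ F ≅ f ⋙ Ind.yoneda` admits a right
adjoint. -/
theorem ind_extension_isLeftAdjoint {C : Type v} [SmallCategory C]
    {C' : Type v} [SmallCategory C'] [HasFiniteColimits C] [HasFiniteColimits C']
    (f : C ⥤ C') [PreservesFiniteColimits f]
    (F : Ind C ⥤ Ind C') [PreservesFilteredColimits F]
    (e : Ind.yoneda ⋙ F ≅ f ⋙ Ind.yoneda) :
    F.IsLeftAdjoint := by
  exact main_thm f F e
end

section
/- For a small category C, a presheaf F : Cᵒᵖ ⥤ Type is a compact (finitely presentable) object of the presheaf category, i.e. Hom(F, -) : (Cᵒᵖ ⥤ Type) ⥤ Type preserves filtered colimits, if and only if F is a retract of a presheaf that is a colimit of a finite diagram of representable presheaves. -/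
open CategoryTheory Limits

universe v

/-- A presheaf is a finite colimit of representables if it is the colimit of a diagram indexed
by a finite category whose values are representable presheaves. -/
def IsFiniteColimitOfRepresentables {C : Type v} [SmallCategory C]
    (F : Cᵒᵖ ⥤ Type v) : Prop :=
  ∃ (J : Type v) (_ : SmallCategory J) (_ : FinCategory J) (D : J ⥤ (Cᵒᵖ ⥤ Type v)),
    (∀ j, (D.obj j).IsRepresentable) ∧ Nonempty (colimit D ≅ F)

namespace CompactPresheafAux

open Opposite


section Filtered

variable {K : Type v} [SmallCategory K] [IsFiltered K]

lemma exists_unifying {ι : Type*} [Finite ι] {k : K} (c : ι → K) (h : ∀ i, k ⟶ c i) :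
    ∃ (d : K) (t : k ⟶ d), ∀ i, ∃ w : c i ⟶ d, h i ≫ w = t := by
  cases nonempty_fintype ι
  classical
  suffices H : ∀ s : Finset ι, ∃ (d : K) (t : k ⟶ d), ∀ i ∈ s, ∃ w : c i ⟶ d, h i ≫ w = t by
    obtain ⟨d, t, ht⟩ := H Finset.univ
    exact ⟨d, t, fun i => ht i (Finset.mem_univ i)⟩
  intro s
  induction s using Finset.induction with
  | empty => exact ⟨k, 𝟙 k, by simp⟩
  | @insert i s hi ih =>
    obtain ⟨d, t, hw⟩ := ih
    refine ⟨IsFiltered.coeq (t ≫ IsFiltered.leftToMax d (c i))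
        (h i ≫ IsFiltered.rightToMax d (c i)),
      (t ≫ IsFiltered.leftToMax d (c i)) ≫ IsFiltered.coeqHom _ _, ?_⟩
    intro j hj
    rcases Finset.mem_insert.mp hj with rfl | hj
    · refine ⟨IsFiltered.rightToMax d (c j) ≫ IsFiltered.coeqHom _ _, ?_⟩
      rw [← Category.assoc, ← IsFiltered.coeq_condition]
    · obtain ⟨w, hw'⟩ := hw j hj
      exact ⟨w ≫ IsFiltered.leftToMax d (c i) ≫ IsFiltered.coeqHom _ _, by
        rw [← Category.assoc, hw', Category.assoc]⟩

end Filtered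

variable {C : Type v} [SmallCategory C]

/-- Retracts of compact presheaves are compact. -/
theorem preservesFiltered_of_retract {X Y : Cᵒᵖ ⥤ Type v} (s : X ⟶ Y) (r : Y ⟶ X)
    (hsr : s ≫ r = 𝟙 X) (hY : PreservesFilteredColimits (coyoneda.obj (op Y))) :
    PreservesFilteredColimits (coyoneda.obj (op X)) := by
  constructor
  intro J _ _
  constructor
  intro T
  constructor
  intro c hc
  haveI := hY
  have hcY : IsColimit ((coyoneda.obj (op Y)).mapCocone c) :=
    isColimitOfPreserves (coyoneda.obj (op Y)) hc
  refine ⟨Types.FilteredColimit.isColimitOf _ _ ?_ ?_⟩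
  · intro f
    obtain ⟨j, y, hy⟩ := Types.jointly_surjective _ hcY (r ≫ f)
    refine ⟨j, s ≫ y, ?_⟩
    dsimp at hy ⊢
    rw [Category.assoc, hy, ← Category.assoc, hsr, Category.id_comp]
  · intro i j xi xj hij
    have h2 : ((coyoneda.obj (op Y)).mapCocone c).ι.app i (r ≫ xi)
        = ((coyoneda.obj (op Y)).mapCocone c).ι.app j (r ≫ xj) := by
      dsimp at hij ⊢
      rw [Category.assoc, Category.assoc, hij]
    rw [Types.FilteredColimit.isColimit_eq_iff _ hcY] at h2
    obtain ⟨k, f, g, hfg⟩ := h2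
    refine ⟨k, f, g, ?_⟩
    dsimp at hfg ⊢
    have := congrArg (fun q => s ≫ q) hfg
    simpa [← Category.assoc, hsr] using this

/-- Representable presheaves are compact. -/
theorem preservesFiltered_of_representable {Y : Cᵒᵖ ⥤ Type v} (hY : Y.IsRepresentable) :
    PreservesFilteredColimits (coyoneda.obj (op Y)) := by
  haveI := hY
  obtain ⟨X, ⟨i⟩⟩ : ∃ X, Nonempty (yoneda.obj X ≅ Y) := ⟨Y.reprX, ⟨Y.reprW⟩⟩
  have e : coyoneda.obj (op (yoneda.obj X)) ≅ (evaluation Cᵒᵖ (Type v)).obj (op X) :=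
    NatIso.ofComponents (fun T => Equiv.toIso yonedaEquiv)
      (fun {T T'} f => by
        ext g
        exact yonedaEquiv_comp g f)
  constructor
  intro J _ _
  haveI : PreservesColimitsOfShape J ((evaluation Cᵒᵖ (Type v)).obj (op X)) := inferInstance
  haveI : PreservesColimitsOfShape J (coyoneda.obj (op (yoneda.obj X))) :=
    preservesColimitsOfShape_of_natIso e.symm
  exact preservesColimitsOfShape_of_natIso (coyoneda.mapIso i.op).symm



section Filtered
variable {K : Type v} [SmallCategory K] [IsFiltered K]

lemma coeq_push {A : Type (v + 1)} [Category.{v} A] {X : A}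
    {T : K ⥤ A} {a e : K} {φ ψ : X ⟶ T.obj a} {p q : a ⟶ e}
    (h : φ ≫ T.map p = ψ ≫ T.map q) :
    ∃ (e' : K) (r : a ⟶ e'), φ ≫ T.map r = ψ ≫ T.map r := by
  refine ⟨IsFiltered.coeq p q, p ≫ IsFiltered.coeqHom p q, ?_⟩
  calc φ ≫ T.map (p ≫ IsFiltered.coeqHom p q)
      = (φ ≫ T.map p) ≫ T.map (IsFiltered.coeqHom p q) := by
        rw [Functor.map_comp, Category.assoc]
    _ = (ψ ≫ T.map q) ≫ T.map (IsFiltered.coeqHom p q) := by rw [h]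
    _ = ψ ≫ T.map (q ≫ IsFiltered.coeqHom p q) := by rw [Functor.map_comp, Category.assoc]
    _ = ψ ≫ T.map (p ≫ IsFiltered.coeqHom p q) := by rw [← IsFiltered.coeq_condition]
end Filtered

variable {C : Type v} [SmallCategory C]

/-- Colimits of finite diagrams of compact presheaves are compact. -/
theorem preservesFiltered_colimit_finite {Jf : Type v} [SmallCategory Jf] [FinCategory Jf]
    (D : Jf ⥤ Cᵒᵖ ⥤ Type v)
    (hD : ∀ j, PreservesFilteredColimits (coyoneda.obj (op (D.obj j)))) :
    PreservesFilteredColimits (coyoneda.obj (op (colimit D))) := by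
  constructor
  intro K _ _
  constructor
  intro T
  constructor
  intro c hc
  have hcD : ∀ j : Jf, IsColimit ((coyoneda.obj (op (D.obj j))).mapCocone c) := fun j => by
    haveI := hD j
    exact isColimitOfPreserves _ hc
  refine ⟨Types.FilteredColimit.isColimitOf _ _ ?_ ?_⟩
  · -- surjectivity
    intro f
    have hfac : ∀ j : Jf, ∃ (k : K) (g : D.obj j ⟶ T.obj k),
        g ≫ c.ι.app k = colimit.ι D j ≫ f := by
      intro j
      obtain ⟨k, g, hg⟩ := Types.jointly_surjective _ (hcD j) (colimit.ι D j ≫ f)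
      exact ⟨k, g, hg⟩
    choose k₀ g₀ hg₀ using hfac
    classical
    let O : Finset K := Finset.univ.image k₀
    let d : K := IsFiltered.sup O ∅
    let w : ∀ j : Jf, k₀ j ⟶ d := fun j =>
      IsFiltered.toSup O ∅ (Finset.mem_image_of_mem k₀ (Finset.mem_univ j))
    let g₁ : ∀ j : Jf, D.obj j ⟶ T.obj d := fun j => g₀ j ≫ T.map (w j)
    have hg₁ : ∀ j, g₁ j ≫ c.ι.app d = colimit.ι D j ≫ f := by
      intro j
      simp only [g₁, Category.assoc]
      rw [c.w (w j)]
      exact hg₀ j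
    have hcoh : ∀ p : Σ j j' : Jf, j ⟶ j', ∃ (e : K) (h : d ⟶ e),
        (D.map p.2.2 ≫ g₁ p.2.1) ≫ T.map h = g₁ p.1 ≫ T.map h := by
      rintro ⟨j, j', m⟩
      have heq : ((coyoneda.obj (op (D.obj j))).mapCocone c).ι.app d (D.map m ≫ g₁ j')
          = ((coyoneda.obj (op (D.obj j))).mapCocone c).ι.app d (g₁ j) := by
        dsimp
        rw [Category.assoc, hg₁ j', hg₁ j, ← Category.assoc, colimit.w D m]
      rw [Types.FilteredColimit.isColimit_eq_iff _ (hcD j)] at heq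
      obtain ⟨e, p, q, hpq⟩ := heq
      exact coeq_push hpq
    choose e₀ h₀ hh₀ using hcoh
    obtain ⟨d', t, ht⟩ := exists_unifying e₀ h₀
    have hnat : ∀ {j j' : Jf} (m : j ⟶ j'),
        D.map m ≫ g₁ j' ≫ T.map t = g₁ j ≫ T.map t := by
      intro j j' m
      obtain ⟨wp, hwp⟩ := ht ⟨j, j', m⟩
      have h2 := congrArg (fun z => z ≫ T.map wp) (hh₀ ⟨j, j', m⟩)
      dsimp at h2
      rw [← hwp]
      simp only [Functor.map_comp, Category.assoc] at h2 ⊢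
      exact h2
    let u : colimit D ⟶ T.obj d' := colimit.desc D
      { pt := T.obj d'
        ι := { app := fun j => g₁ j ≫ T.map t
               naturality := fun j j' m => by simpa using hnat m } }
    refine ⟨d', u, ?_⟩
    dsimp
    symm
    apply colimit.hom_ext
    intro j
    rw [← Category.assoc, colimit.ι_desc]
    dsimp
    simp only [Category.assoc, Cocone.w]
    exact hg₁ j
  · -- injectivity
    intro i j xi xj hij
    dsimp at xi xj hij
    have hjj : ∀ j₀ : Jf, ∃ (e : K) (h : IsFiltered.max i j ⟶ e),
        (colimit.ι D j₀ ≫ xi ≫ T.map (IsFiltered.leftToMax i j)) ≫ T.map h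
          = (colimit.ι D j₀ ≫ xj ≫ T.map (IsFiltered.rightToMax i j)) ≫ T.map h := by
      intro j₀
      have heq : ((coyoneda.obj (op (D.obj j₀))).mapCocone c).ι.app (IsFiltered.max i j)
            (colimit.ι D j₀ ≫ xi ≫ T.map (IsFiltered.leftToMax i j))
          = ((coyoneda.obj (op (D.obj j₀))).mapCocone c).ι.app (IsFiltered.max i j)
            (colimit.ι D j₀ ≫ xj ≫ T.map (IsFiltered.rightToMax i j)) := by
        dsimp
        simp only [Category.assoc, Cocone.w]
        rw [hij]
      rw [Types.FilteredColimit.isColimit_eq_iff _ (hcD j₀)] at heq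
      obtain ⟨e, p, q, hpq⟩ := heq
      exact coeq_push hpq
    choose e₀ h₀ hh₀ using hjj
    obtain ⟨l', t, ht⟩ := exists_unifying e₀ h₀
    refine ⟨l', IsFiltered.leftToMax i j ≫ t, IsFiltered.rightToMax i j ≫ t, ?_⟩
    dsimp
    apply colimit.hom_ext
    intro j₀
    obtain ⟨wp, hwp⟩ := ht j₀
    have h2 := congrArg (fun z => z ≫ T.map wp) (hh₀ j₀)
    rw [← hwp]
    simp only [Functor.map_comp, Category.assoc] at h2 ⊢
    exact h2



section WM
variable (J : MultispanShape.{v, v})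

/-- The walking multispan is equivalent to a sum type. -/
def wmEquiv : WalkingMultispan J ≃ J.L ⊕ J.R where
  toFun x := match x with
    | .left a => Sum.inl a
    | .right b => Sum.inr b
  invFun x := match x with
    | .inl a => .left a
    | .inr b => .right b
  left_inv x := by cases x <;> rfl
  right_inv x := by cases x <;> rfl

instance [Finite J.L] [Finite J.R] : Finite (WalkingMultispan J) :=
  Finite.of_equiv _ (wmEquiv J).symm

/-- Encode all morphisms of the walking multispan. -/
def homEnc : (Σ X Y : WalkingMultispan J, WalkingMultispan.Hom X Y) →
    WalkingMultispan J ⊕ J.L ⊕ J.L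
  | ⟨_, _, .id A⟩ => Sum.inl A
  | ⟨_, _, .fst a⟩ => Sum.inr (Sum.inl a)
  | ⟨_, _, .snd a⟩ => Sum.inr (Sum.inr a)

lemma homEnc_injective : Function.Injective (homEnc J) := by
  rintro ⟨X, Y, f⟩ ⟨X', Y', g⟩ h
  cases f <;> cases g <;> simp_all [homEnc] <;> subst h <;> rfl

instance [Finite J.L] [Finite J.R] :
    Finite (Σ X Y : WalkingMultispan J, WalkingMultispan.Hom X Y) :=
  Finite.of_injective _ (homEnc_injective J)

instance [Finite J.L] [Finite J.R] (X Y : WalkingMultispan J) : Finite (X ⟶ Y) := by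
  apply Finite.of_injective
    (fun f => (⟨X, Y, f⟩ : Σ X Y : WalkingMultispan J, WalkingMultispan.Hom X Y))
  intro a b h
  simpa using h

noncomputable instance [Finite J.L] [Finite J.R] : FinCategory (WalkingMultispan J) where
  fintypeObj := Fintype.ofFinite _
  fintypeHom _ _ := Fintype.ofFinite _

end WM

variable (F : Cᵒᵖ ⥤ Type v)

/-- Elements of the presheaf `F`. -/
abbrev Elt : Type v := Σ c : C, F.obj (op c)

/-- Morphisms between elements of `F`. -/
abbrev Mor : Type v := Σ a b : Elt F, {f : a.1 ⟶ b.1 // F.map f.op b.2 = a.2}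

/-- The filtered poset of finite subdiagrams of the diagram of elements of `F`. -/
def Idx : Type v := {p : Set (Elt F) × Set (Mor F) //
  p.1.Finite ∧ p.2.Finite ∧ ∀ m ∈ p.2, m.1 ∈ p.1 ∧ m.2.1 ∈ p.1}

instance : Preorder (Idx F) := Subtype.preorder _

instance : Nonempty (Idx F) :=
  ⟨⟨(∅, ∅), Set.finite_empty, Set.finite_empty, by simp⟩⟩

instance : IsDirected (Idx F) (· ≤ ·) := by
  constructor
  rintro ⟨⟨O₁, M₁⟩, h₁, h₂, h₃⟩ ⟨⟨O₂, M₂⟩, g₁, g₂, g₃⟩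
  refine ⟨⟨(O₁ ∪ O₂, M₁ ∪ M₂), h₁.union g₁, h₂.union g₂, ?_⟩, ⟨?_, ?_⟩, ⟨?_, ?_⟩⟩
  · rintro m (hm | hm)
    · exact ⟨Or.inl (h₃ m hm).1, Or.inl (h₃ m hm).2⟩
    · exact ⟨Or.inr (g₃ m hm).1, Or.inr (g₃ m hm).2⟩
  · exact Set.subset_union_left
  · exact Set.subset_union_left
  · exact Set.subset_union_right
  · exact Set.subset_union_right

instance : IsFiltered (Idx F) := inferInstance

/-- The multispan index associated to a finite subdiagram. -/
def shp (k : Idx F) : MultispanShape.{v, v} where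
  L := ↥k.1.2
  R := ↥k.1.1
  fst m := ⟨m.1.1, (k.2.2.2 m.1 m.2).1⟩
  snd m := ⟨m.1.2.1, (k.2.2.2 m.1 m.2).2⟩

def idx (k : Idx F) : MultispanIndex (shp F k) (Cᵒᵖ ⥤ Type v) where
  left m := yoneda.obj m.1.1.1
  right o := yoneda.obj o.1.1
  fst m := 𝟙 _
  snd m := yoneda.map m.1.2.2.1

instance (k : Idx F) : Finite (shp F k).L := k.2.2.1.to_subtype
instance (k : Idx F) : Finite (shp F k).R := k.2.1.to_subtype

/-- The diagram of representables indexed by a finite subdiagram. -/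
noncomputable abbrev Dk (k : Idx F) : WalkingMultispan (shp F k) ⥤
    (Cᵒᵖ ⥤ Type v) :=
  (idx F k).multispan

/-- Inclusion of objects. -/
def inclO {k k' : Idx F} (h : k ≤ k') (o : (shp F k).R) : (shp F k').R := ⟨o.1, h.1 o.2⟩

/-- Inclusion of morphisms. -/
def inclM {k k' : Idx F} (h : k ≤ k') (m : (shp F k).L) : (shp F k').L := ⟨m.1, h.2 m.2⟩

/-- The transition cocone. -/
noncomputable def transCofork {k k' : Idx F} (h : k ≤ k') : Multicofork (idx F k) :=
  Multicofork.ofπ _ (colimit (Dk F k'))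
    (fun o => colimit.ι (Dk F k') (.right (inclO F h o)))
    (fun m =>
      (colimit.w (Dk F k') (WalkingMultispan.Hom.fst (inclM F h m))).trans
        (colimit.w (Dk F k') (WalkingMultispan.Hom.snd (inclM F h m))).symm)

lemma desc_ext {k : Idx F} {X : Cᵒᵖ ⥤ Type v} {a b : colimit (Dk F k) ⟶ X}
    (h : ∀ o, colimit.ι (Dk F k) (.right o) ≫ a = colimit.ι (Dk F k) (.right o) ≫ b) :
    a = b := by
  apply colimit.hom_ext
  rintro (m | o)
  · rw [← colimit.w (Dk F k) (WalkingMultispan.Hom.fst m), Category.assoc, Category.assoc, h]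
  · exact h o

/-- The filtered system of finite colimits of representables. -/
noncomputable def Gfun : Idx F ⥤ (Cᵒᵖ ⥤ Type v) where
  obj k := colimit (Dk F k)
  map {k k'} φ := colimit.desc _ (transCofork F (leOfHom φ))
  map_id k := by
    apply desc_ext
    intro o
    rw [colimit.ι_desc]
    exact (Category.comp_id (colimit.ι (Dk F k) (.right o))).symm
  map_comp {k k' k''} φ ψ := by
    apply desc_ext
    intro o
    rw [colimit.ι_desc]
    exact ((colimit.ι_desc (transCofork F (leOfHom ψ))
      (.right (inclO F (leOfHom φ) o))).symm.trans
      (congrArg (fun z : (Dk F k).obj (.right o) ⟶ colimit (Dk F k') =>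
        z ≫ colimit.desc (Dk F k') (transCofork F (leOfHom ψ)))
        (colimit.ι_desc (transCofork F (leOfHom φ)) (.right o)).symm)).trans
      (Category.assoc _ _ _)

lemma ι_Gmap {k k' : Idx F} (φ : k ⟶ k') (o : (shp F k).R) :
    colimit.ι (Dk F k) (.right o) ≫ (Gfun F).map φ
      = colimit.ι (Dk F k') (.right (inclO F (leOfHom φ) o)) :=
  colimit.ι_desc (transCofork F (leOfHom φ)) (.right o)

/-- The canonical map from each finite colimit of representables to `F`. -/
noncomputable def toF (k : Idx F) : colimit (Dk F k) ⟶ F :=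
  colimit.desc _ (Multicofork.ofπ (idx F k) F (fun o => yonedaEquiv.symm o.1.2) (fun m => by
    dsimp [idx]
    erw [yonedaEquiv_symm_naturality_left, m.1.2.2.2, Category.id_comp]; rfl))

lemma ι_toF (k : Idx F) (o : (shp F k).R) :
    colimit.ι (Dk F k) (.right o) ≫ toF F k = yonedaEquiv.symm o.1.2 :=
  colimit.ι_desc _ _

lemma toF_app (k : Idx F) (o : (shp F k).R) (c₀ : Cᵒᵖ) (g : unop c₀ ⟶ o.1.1) :
    (toF F k).app c₀ ((colimit.ι (Dk F k) (.right o)).app c₀ g) = F.map g.op o.1.2 := by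
  have h := types_congr_hom (NatTrans.congr_app (ι_toF F k o) c₀) g
  exact h

/-- The cocone over the filtered system with apex `F`. -/
noncomputable def coconeG : Cocone (Gfun F) where
  pt := F
  ι :=
    { app := toF F
      naturality := fun k k' φ => by
        apply desc_ext
        intro o
        erw [← Category.assoc, ι_Gmap]
        show colimit.ι (Dk F k') (.right (inclO F (leOfHom φ) o)) ≫ toF F k'
            = colimit.ι (Dk F k) (.right o) ≫ toF F k ≫ 𝟙 F
        rw [Category.comp_id]
        exact (ι_toF F k' _).trans (ι_toF F k o).symm }

lemma ι_coconeG (k : Idx F) : (coconeG F).ι.app k = toF F k := rfl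

lemma exists_rep (k : Idx F) (c₀ : Cᵒᵖ) (ξ : (colimit (Dk F k)).obj c₀) :
    ∃ (o : (shp F k).R) (g : unop c₀ ⟶ o.1.1),
      ξ = (colimit.ι (Dk F k) (.right o)).app c₀ g := by
  have hev : IsColimit (((evaluation Cᵒᵖ (Type v)).obj c₀).mapCocone
      (colimit.cocone (Dk F k))) := isColimitOfPreserves _ (colimit.isColimit _)
  obtain ⟨j, y, hy⟩ := Types.jointly_surjective _ hev ξ
  dsimp at hy
  match j, y, hy with
  | .right o, y, hy => exact ⟨o, y, hy.symm⟩
  | .left m, y, hy =>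
    refine ⟨(shp F k).fst m, y, ?_⟩
    rw [← hy]
    have h := types_congr_hom (NatTrans.congr_app
      (colimit.w (Dk F k) (WalkingMultispan.Hom.fst m)) c₀) y
    exact h.symm

lemma rel_app (k : Idx F) (m : (shp F k).L) (c₀ : Cᵒᵖ) (g : unop c₀ ⟶ m.1.1.1) :
    (colimit.ι (Dk F k) (.right ((shp F k).fst m))).app c₀ g
      = (colimit.ι (Dk F k) (.right ((shp F k).snd m))).app c₀ (g ≫ m.1.2.2.1) := by
  have h1 := types_congr_hom (NatTrans.congr_app
    (colimit.w (Dk F k) (WalkingMultispan.Hom.fst m)) c₀) g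
  have h2 := types_congr_hom (NatTrans.congr_app
    (colimit.w (Dk F k) (WalkingMultispan.Hom.snd m)) c₀) g
  exact h1.trans h2.symm

/-- The cocone `coconeG` is a colimit cocone. -/
noncomputable def coconeGIsColimit : IsColimit (coconeG F) := by
  apply evaluationJointlyReflectsColimits
  intro c₀
  apply Types.FilteredColimit.isColimitOf
  · -- joint surjectivity
    intro x
    dsimp at x
    let e : Elt F := ⟨unop c₀, x⟩
    let k₁ : Idx F := ⟨({e}, ∅), Set.finite_singleton _, Set.finite_empty, by simp⟩
    refine ⟨k₁, (colimit.ι (Dk F k₁)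
      (.right ⟨e, Set.mem_singleton _⟩)).app c₀ (𝟙 (unop c₀)), ?_⟩
    show x = (toF F k₁).app c₀ _
    erw [toF_app]
    simp [e]
  · -- joint injectivity
    intro k k' ξ ξ' hee
    dsimp at ξ ξ' hee
    obtain ⟨o, g, rfl⟩ := exists_rep F k c₀ ξ
    obtain ⟨o', g', rfl⟩ := exists_rep F k' c₀ ξ'
    erw [ι_coconeG, ι_coconeG, toF_app, toF_app] at hee
    set x : F.obj c₀ := F.map g.op o.1.2 with hx
    let e : Elt F := ⟨unop c₀, x⟩
    let m₁ : Mor F := ⟨e, o.1, g, hx.symm⟩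
    let m₂ : Mor F := ⟨e, o'.1, g', hee.symm⟩
    let k'' : Idx F := ⟨(k.1.1 ∪ k'.1.1 ∪ {e}, k.1.2 ∪ k'.1.2 ∪ {m₁, m₂}),
      (k.2.1.union k'.2.1).union (Set.finite_singleton _),
      (k.2.2.1.union k'.2.2.1).union ((Set.finite_singleton m₂).insert m₁),
      ?_⟩
    rotate_left
    · rintro m ((hm | hm) | (rfl | rfl))
      · exact ⟨Or.inl (Or.inl (k.2.2.2 m hm).1), Or.inl (Or.inl (k.2.2.2 m hm).2)⟩
      · exact ⟨Or.inl (Or.inr (k'.2.2.2 m hm).1), Or.inl (Or.inr (k'.2.2.2 m hm).2)⟩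
      · exact ⟨Or.inr rfl, Or.inl (Or.inl o.2)⟩
      · exact ⟨Or.inr rfl, Or.inl (Or.inr o'.2)⟩
    have le₁ : k ≤ k'' := ⟨fun a ha => Or.inl (Or.inl ha), fun a ha => Or.inl (Or.inl ha)⟩
    have le₂ : k' ≤ k'' := ⟨fun a ha => Or.inl (Or.inr ha), fun a ha => Or.inl (Or.inr ha)⟩
    refine ⟨k'', homOfLE le₁, homOfLE le₂, ?_⟩
    have h1 := types_congr_hom (NatTrans.congr_app (ι_Gmap F (homOfLE le₁) o) c₀) g
    have h2 := types_congr_hom (NatTrans.congr_app (ι_Gmap F (homOfLE le₂) o') c₀) g'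
    dsimp at h1 h2 ⊢
    erw [h1, h2]
    let mm₁ : (shp F k'').L := ⟨m₁, Or.inr (Or.inl rfl)⟩
    let mm₂ : (shp F k'').L := ⟨m₂, Or.inr (Or.inr rfl)⟩
    have r1 := rel_app F k'' mm₁ c₀ (𝟙 (unop c₀))
    have r2 := rel_app F k'' mm₂ c₀ (𝟙 (unop c₀))
    erw [Category.id_comp] at r1 r2
    exact r1.symm.trans r2


end CompactPresheafAux

open Opposite CompactPresheafAux in
/-- For a small category `C`, a presheaf `F : Cᵒᵖ ⥤ Type` is a compact (finitely presentable)
object of the presheaf category, i.e. `Hom(F, -)` preserves filtered colimits, if and only if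
`F` is a retract of a finite colimit of representables. -/
theorem compact_presheaf_iff_retract_of_finite_colimit_of_representables
    {C : Type v} [SmallCategory C] (F : Cᵒᵖ ⥤ Type v) :
    PreservesFilteredColimits (coyoneda.obj (Opposite.op F)) ↔
      ∃ G : Cᵒᵖ ⥤ Type v, IsFiniteColimitOfRepresentables G ∧
        ∃ (s : F ⟶ G) (r : G ⟶ F), s ≫ r = 𝟙 F := by
  constructor
  · intro hF
    haveI := hF
    have hc' : IsColimit ((coyoneda.obj (op F)).mapCocone (coconeG F)) :=
      isColimitOfPreserves _ (coconeGIsColimit F)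
    obtain ⟨k, s, hs⟩ := Types.jointly_surjective _ hc' (𝟙 F)
    dsimp at hs
    refine ⟨(Gfun F).obj k,
      ⟨_, inferInstance, inferInstance, (idx F k).multispan, ?_, ⟨Iso.refl _⟩⟩,
      s, (coconeG F).ι.app k, hs⟩
    rintro (m | o)
    · exact inferInstanceAs (yoneda.obj _).IsRepresentable
    · exact inferInstanceAs (yoneda.obj _).IsRepresentable
  · rintro ⟨G, ⟨J, _, _, D, hrep, ⟨e⟩⟩, s, r, hsr⟩
    have hD : ∀ j, PreservesFilteredColimits (coyoneda.obj (op (D.obj j))) :=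
      fun j => preservesFiltered_of_representable (hrep j)
    exact preservesFiltered_of_retract (s ≫ e.inv) (e.hom ≫ r)
      (by rw [Category.assoc, Iso.inv_hom_id_assoc, hsr])
      (preservesFiltered_colimit_finite D hD)
end
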